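/- arXiv:1710.08111 — 9 statements merged into one kernel-verified Lean document; each statement's English description precedes it below -/
import Mathlib

section
/- Let H be a radius-1 one-sided CA over a finite alphabet B with local rule h, let q ∈ B be a spreading state for H, and suppose H is nilpotent. Let F₀ be a radius-1 one-sided CA over a finite alphabet A with local rule f₀ such that F₀ is bijective and its inverse is also a radius-1 CA. Define the radius-1 CA 𝓕 and 𝓖 over A × B as in the construction. Then 𝓕 and 𝓖 are strongly conjugate: there is a homeomorphism φ : (ℕ → A × B) → (ℕ → A × B) with φ∘𝓕 = 𝓖∘φ and φ∘σ = σ∘φ. -/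
/-- The one-sided shift map `σ(c)(i) = c(i+1)`. -/
def shift {A : Type*} (c : ℕ → A) : ℕ → A := fun i => c (i + 1)

namespace ConjAux

variable {A B : Type} [DecidableEq B]

/-- One step of the `B`-track dynamics. -/
def Hfun (h : B × B → B) (b : ℕ → B) : ℕ → B := fun i => h (b i, b (i + 1))

/-- One step of the `A`-track dynamics of `𝓕`, given the current `B`-track `b`. -/
def Fstep (h : B × B → B) (q : B) (f₀ : A × A → A) (b : ℕ → B) (a : ℕ → A) : ℕ → A :=
  fun i => if h (b i, b (i + 1)) = q then a i else f₀ (a i, a (i + 1))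

/-- Local inverse of `Fstep`. -/
def Gstep (h : B × B → B) (q : B) (g₀ : A × A → A) (d : A → A → A) (b : ℕ → B) (c : ℕ → A) :
    ℕ → A :=
  fun i => if h (b i, b (i + 1)) = q then c i
    else if h (b (i + 1), b (i + 2)) = q then d (c (i + 1)) (c i)
    else g₀ (c i, c (i + 1))

def FIter (h : B × B → B) (q : B) (f₀ : A × A → A) : ℕ → (ℕ → B) → (ℕ → A) → (ℕ → A)
  | 0, _, a => a
  | n + 1, b, a => FIter h q f₀ n (Hfun h b) (Fstep h q f₀ b a)

def GIter (h : B × B → B) (q : B) (g₀ : A × A → A) (d : A → A → A) :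
    ℕ → (ℕ → B) → (ℕ → A) → (ℕ → A)
  | 0, _, a => a
  | n + 1, b, a => Gstep h q g₀ d b (GIter h q g₀ d n (Hfun h b) a)

variable {h : B × B → B} {q : B} {f₀ g₀ : A × A → A} {d : A → A → A}

lemma Gstep_Fstep
    (I1 : ∀ x y z : A, g₀ (f₀ (x, y), f₀ (y, z)) = x)
    (Id1 : ∀ x y : A, d y (f₀ (x, y)) = x)
    (b : ℕ → B) (a : ℕ → A) :
    Gstep h q g₀ d b (Fstep h q f₀ b a) = a := by
  funext i
  simp only [Gstep, Fstep, show i + 1 + 1 = i + 2 from rfl]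
  by_cases h1 : h (b i, b (i + 1)) = q
  · simp [h1]
  · by_cases h2 : h (b (i + 1), b (i + 2)) = q
    · simp [h1, h2, Id1]
    · simp [h1, h2, I1]

lemma Fstep_Gstep
    (I1 : ∀ x y z : A, g₀ (f₀ (x, y), f₀ (y, z)) = x)
    (I2 : ∀ u v w : A, f₀ (g₀ (u, v), g₀ (v, w)) = u)
    (Id2 : ∀ x y : A, f₀ (d y x, y) = x)
    (b : ℕ → B) (c : ℕ → A) :
    Fstep h q f₀ b (Gstep h q g₀ d b c) = c := by
  funext i
  simp only [Fstep, Gstep, show i + 1 + 1 = i + 2 from rfl, show i + 1 + 2 = i + 3 from rfl]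
  by_cases h1 : h (b i, b (i + 1)) = q
  · simp [h1]
  · by_cases h2 : h (b (i + 1), b (i + 2)) = q
    · simp [h1, h2, Id2]
    · by_cases h3 : h (b (i + 2), b (i + 3)) = q
      · simp only [h1, h2, h3, if_neg, if_pos, if_false, if_true]
        have hx : f₀ (d (c (i + 2)) (c (i + 1)), c (i + 2)) = c (i + 1) := Id2 _ _
        have hg : g₀ (c (i + 1), f₀ (c (i + 2), c (i + 2))) = d (c (i + 2)) (c (i + 1)) := by
          conv_lhs => rw [← hx]
          exact I1 _ _ _
        rw [← hg]
        exact I2 _ _ _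
      · simp [h1, h2, h3, I2]

lemma GIter_FIter
    (I1 : ∀ x y z : A, g₀ (f₀ (x, y), f₀ (y, z)) = x)
    (Id1 : ∀ x y : A, d y (f₀ (x, y)) = x)
    (n : ℕ) : ∀ (b : ℕ → B) (a : ℕ → A),
    GIter h q g₀ d n b (FIter h q f₀ n b a) = a := by
  induction n with
  | zero => intro b a; rfl
  | succ n ih =>
      intro b a
      show Gstep h q g₀ d b (GIter h q g₀ d n (Hfun h b)
        (FIter h q f₀ n (Hfun h b) (Fstep h q f₀ b a))) = a
      rw [ih, Gstep_Fstep I1 Id1]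

lemma FIter_GIter
    (I1 : ∀ x y z : A, g₀ (f₀ (x, y), f₀ (y, z)) = x)
    (I2 : ∀ u v w : A, f₀ (g₀ (u, v), g₀ (v, w)) = u)
    (Id2 : ∀ x y : A, f₀ (d y x, y) = x)
    (n : ℕ) : ∀ (b : ℕ → B) (a : ℕ → A),
    FIter h q f₀ n b (GIter h q g₀ d n b a) = a := by
  induction n with
  | zero => intro b a; rfl
  | succ n ih =>
      intro b a
      show FIter h q f₀ n (Hfun h b)
        (Fstep h q f₀ b (Gstep h q g₀ d b (GIter h q g₀ d n (Hfun h b) a))) = a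
      rw [Fstep_Gstep I1 I2 Id2, ih]

lemma FIter_succ_last (n : ℕ) : ∀ (b : ℕ → B) (a : ℕ → A),
    FIter h q f₀ (n + 1) b a = Fstep h q f₀ ((Hfun h)^[n] b) (FIter h q f₀ n b a) := by
  induction n with
  | zero => intro b a; rfl
  | succ n ih =>
      intro b a
      show FIter h q f₀ (n + 1) (Hfun h b) (Fstep h q f₀ b a) = _
      rw [ih]
      rw [← Function.iterate_succ_apply]
      rfl

lemma Fstep_const_q (hq : h (q, q) = q) (a : ℕ → A) :
    Fstep h q f₀ (fun _ => q) a = a := by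
  funext i; simp [Fstep, hq]

lemma FIter_stable (hq : h (q, q) = q) {N : ℕ} {b : ℕ → B}
    (hb : (Hfun h)^[N] b = fun _ => q) (a : ℕ → A) :
    FIter h q f₀ N (Hfun h b) (Fstep h q f₀ b a) = FIter h q f₀ N b a := by
  show FIter h q f₀ (N + 1) b a = FIter h q f₀ N b a
  rw [FIter_succ_last, hb, Fstep_const_q hq]

omit [DecidableEq B] in
lemma Hfun_shift (b : ℕ → B) : Hfun h (shift b) = shift (Hfun h b) := rfl

lemma Fstep_shift (b : ℕ → B) (a : ℕ → A) :
    Fstep h q f₀ (shift b) (shift a) = shift (Fstep h q f₀ b a) := rfl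

lemma FIter_shift (n : ℕ) : ∀ (b : ℕ → B) (a : ℕ → A),
    FIter h q f₀ n (shift b) (shift a) = shift (FIter h q f₀ n b a) := by
  induction n with
  | zero => intro b a; rfl
  | succ n ih =>
      intro b a
      show FIter h q f₀ n (Hfun h (shift b)) (Fstep h q f₀ (shift b) (shift a)) = _
      rw [Hfun_shift, Fstep_shift, ih]
      rfl

section Cont
variable [TopologicalSpace A] [DiscreteTopology A] [TopologicalSpace B] [DiscreteTopology B]

omit [DecidableEq B] in
lemma cont_Hfun : Continuous (Hfun h) := by
  apply continuous_pi; intro i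
  have : (fun b : ℕ → B => Hfun h b i) =
      (fun v : B × B => h v) ∘ (fun b : ℕ → B => (b i, b (i + 1))) := rfl
  rw [this]
  exact continuous_of_discreteTopology.comp
    ((continuous_apply i).prodMk (continuous_apply (i + 1)))

lemma cont_Fstep : Continuous (fun p : (ℕ → B) × (ℕ → A) => Fstep h q f₀ p.1 p.2) := by
  apply continuous_pi; intro i
  have : (fun p : (ℕ → B) × (ℕ → A) => Fstep h q f₀ p.1 p.2 i) =
      (fun v : (B × B) × A × A => if h v.1 = q then v.2.1 else f₀ v.2) ∘
      (fun p : (ℕ → B) × (ℕ → A) => ((p.1 i, p.1 (i + 1)), p.2 i, p.2 (i + 1))) := rfl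
  rw [this]
  refine continuous_of_discreteTopology.comp ?_
  exact (((continuous_apply i).comp continuous_fst).prodMk
      ((continuous_apply (i + 1)).comp continuous_fst)).prodMk
    (((continuous_apply i).comp continuous_snd).prodMk
      ((continuous_apply (i + 1)).comp continuous_snd))

lemma cont_Gstep : Continuous (fun p : (ℕ → B) × (ℕ → A) => Gstep h q g₀ d p.1 p.2) := by
  apply continuous_pi; intro i
  have : (fun p : (ℕ → B) × (ℕ → A) => Gstep h q g₀ d p.1 p.2 i) =
      (fun v : (B × B × B) × A × A × A =>
        if h (v.1.1, v.1.2.1) = q then v.2.1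
        else if h (v.1.2.1, v.1.2.2) = q then d v.2.2.1 v.2.1
        else g₀ (v.2.1, v.2.2.1)) ∘
      (fun p : (ℕ → B) × (ℕ → A) =>
        ((p.1 i, p.1 (i + 1), p.1 (i + 2)), p.2 i, p.2 (i + 1), p.2 (i + 2))) := rfl
  rw [this]
  refine continuous_of_discreteTopology.comp ?_
  exact (((continuous_apply i).comp continuous_fst).prodMk
      (((continuous_apply (i + 1)).comp continuous_fst).prodMk
        ((continuous_apply (i + 2)).comp continuous_fst))).prodMk
    (((continuous_apply i).comp continuous_snd).prodMk
      (((continuous_apply (i + 1)).comp continuous_snd).prodMk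
        ((continuous_apply (i + 2)).comp continuous_snd)))

lemma cont_FIter (n : ℕ) :
    Continuous (fun p : (ℕ → B) × (ℕ → A) => FIter h q f₀ n p.1 p.2) := by
  induction n with
  | zero => exact continuous_snd
  | succ n ih =>
      have : (fun p : (ℕ → B) × (ℕ → A) => FIter h q f₀ (n + 1) p.1 p.2) =
          (fun p : (ℕ → B) × (ℕ → A) => FIter h q f₀ n p.1 p.2) ∘
          (fun p : (ℕ → B) × (ℕ → A) => (Hfun h p.1, Fstep h q f₀ p.1 p.2)) := rfl
      rw [this]
      exact ih.comp ((cont_Hfun.comp continuous_fst).prodMk cont_Fstep)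

lemma cont_GIter (n : ℕ) :
    Continuous (fun p : (ℕ → B) × (ℕ → A) => GIter h q g₀ d n p.1 p.2) := by
  induction n with
  | zero => exact continuous_snd
  | succ n ih =>
      have : (fun p : (ℕ → B) × (ℕ → A) => GIter h q g₀ d (n + 1) p.1 p.2) =
          (fun p : (ℕ → B) × (ℕ → A) => Gstep h q g₀ d p.1 p.2) ∘
          (fun p : (ℕ → B) × (ℕ → A) => (p.1, GIter h q g₀ d n (Hfun h p.1) p.2)) := rfl
      rw [this]
      refine cont_Gstep.comp (continuous_fst.prodMk ?_)
      exact ih.comp ((cont_Hfun.comp continuous_fst).prodMk continuous_snd)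

end Cont
end ConjAux

/-- If `H` is a nilpotent radius-1 one-sided CA over `B` with spreading state `q`, and `F₀` is a
bijective radius-1 one-sided CA over `A` whose inverse is also a radius-1 CA, then the CA `𝓕`
and `𝓖` over `A × B` of the construction (where `𝓖 = id × H`, and `𝓕` applies `F₀` on the
`A`-track exactly where the `B`-track does not become `q`) are strongly conjugate. -/
theorem construction_strongly_conjugate_of_nilpotent
    {A B : Type} [DecidableEq B] [Fintype A] [Nonempty A] [TopologicalSpace A] [DiscreteTopology A]
    [Fintype B] [Nonempty B] [TopologicalSpace B] [DiscreteTopology B]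
    (h : B × B → B) (q : B) (f₀ : A × A → A)
    (H : (ℕ → B) → ℕ → B) (F₀ : (ℕ → A) → ℕ → A)
    (hH : ∀ c i, H c i = h (c i, c (i + 1)))
    (hF₀ : ∀ c i, F₀ c i = f₀ (c i, c (i + 1)))
    -- `q` is a spreading state for `H`
    (hspread : ∀ b b' : B, b = q ∨ b' = q → h (b, b') = q)
    -- `H` is nilpotent
    (hnilp : ∃ q' : B, H (fun _ => q') = (fun _ => q') ∧ ∀ c, ∃ n, H^[n] c = fun _ => q')
    -- `F₀` is bijective, and its inverse is also a radius-1 CA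
    (hbij : Function.Bijective F₀)
    (hinv : ∃ G₀ : (ℕ → A) → ℕ → A, (∃ g₀ : A × A → A, ∀ c i, G₀ c i = g₀ (c i, c (i + 1))) ∧
      G₀ ∘ F₀ = id ∧ F₀ ∘ G₀ = id)
    -- the CA `𝓕` and `𝓖` of the construction
    (𝓕 𝓖 : (ℕ → A × B) → ℕ → A × B)
    (h𝓖 : ∀ c i, 𝓖 c i = ((c i).1, h ((c i).2, (c (i + 1)).2)))
    (h𝓕 : ∀ c i, 𝓕 c i =
      if h ((c i).2, (c (i + 1)).2) = q then ((c i).1, h ((c i).2, (c (i + 1)).2))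
      else (f₀ ((c i).1, (c (i + 1)).1), h ((c i).2, (c (i + 1)).2))) :
    ∃ φ : (ℕ → A × B) ≃ₜ (ℕ → A × B), ⇑φ ∘ 𝓕 = 𝓖 ∘ ⇑φ ∧ ⇑φ ∘ shift = shift ∘ ⇑φ := by
  classical
  obtain ⟨G₀, ⟨g₀, hG₀⟩, hGFid, hFGid⟩ := hinv
  -- the local identities satisfied by `f₀` and `g₀`
  have I1 : ∀ x y z : A, g₀ (f₀ (x, y), f₀ (y, z)) = x := by
    intro x y z
    have h0 : G₀ (F₀ (fun i => if i = 0 then x else if i = 1 then y else z)) 0 =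
        (fun i : ℕ => if i = 0 then x else if i = 1 then y else z) 0 :=
      congrFun (congrFun hGFid _) 0
    rw [hG₀, hF₀, hF₀] at h0
    exact h0
  have I2 : ∀ u v w : A, f₀ (g₀ (u, v), g₀ (v, w)) = u := by
    intro x y z
    have h0 : F₀ (G₀ (fun i => if i = 0 then x else if i = 1 then y else z)) 0 =
        (fun i : ℕ => if i = 0 then x else if i = 1 then y else z) 0 :=
      congrFun (congrFun hFGid _) 0
    rw [hF₀, hG₀, hG₀] at h0
    exact h0
  set d : A → A → A := fun y x => g₀ (x, f₀ (y, y)) with hd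
  have Id1 : ∀ x y : A, d y (f₀ (x, y)) = x := fun x y => I1 x y y
  have Id2 : ∀ x y : A, f₀ (d y x, y) = x := by
    intro x y
    have hinj : Function.Injective (fun z : A => f₀ (z, y)) := by
      intro u v huv
      have hu := I1 u y y
      have hv := I1 v y y
      simp only at huv
      rw [← hu, ← hv, huv]
    have hsurj : Function.Surjective (fun z : A => f₀ (z, y)) :=
      Finite.injective_iff_surjective.mp hinj
    obtain ⟨x', hx'⟩ := hsurj x
    simp only at hx'
    rw [← hx']
    show f₀ (d y (f₀ (x', y)), y) = f₀ (x', y)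
    rw [Id1]
  -- `q` is quiescent and `H` is uniformly nilpotent
  have hHfun : H = ConjAux.Hfun h := funext fun c => funext fun i => hH c i
  have hq : h (q, q) = q := hspread q q (Or.inl rfl)
  have hfixq : H (fun _ => q) = fun _ => q := funext fun i => by rw [hH]; exact hq
  obtain ⟨q', hq'fix, hq'nil⟩ := hnilp
  have hq'q : q' = q := by
    obtain ⟨n, hn⟩ := hq'nil (fun _ => q)
    have hfix : H^[n] (fun _ => q) = fun _ => q := Function.iterate_fixed hfixq n
    have heq : (fun _ : ℕ => q) = fun _ : ℕ => q' := by rw [← hn, hfix]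
    exact (congrFun heq 0).symm
  have hnil : ∀ c, ∃ n, H^[n] c = fun _ => q := by
    intro c; obtain ⟨n, hn⟩ := hq'nil c; exact ⟨n, by rw [hn, hq'q]⟩
  have hHcont : Continuous H := by rw [hHfun]; exact ConjAux.cont_Hfun
  have hUopen : ∀ n : ℕ, IsOpen {c : ℕ → B | H^[n] c 0 = q} := by
    intro n
    have he : {c : ℕ → B | H^[n] c 0 = q} = (fun c => H^[n] c 0) ⁻¹' {q} := rfl
    rw [he]
    exact ((continuous_apply 0).comp (hHcont.iterate n)).isOpen_preimage _ (isOpen_discrete _)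
  have hUmono : ∀ n : ℕ, ∀ c : ℕ → B, H^[n] c 0 = q → H^[n + 1] c 0 = q := by
    intro n c hc
    rw [Function.iterate_succ_apply', hH]
    exact hspread _ _ (Or.inl hc)
  have hUle : ∀ {n m : ℕ}, n ≤ m → ∀ c : ℕ → B, H^[n] c 0 = q → H^[m] c 0 = q := by
    intro n m hnm
    induction m, hnm using Nat.le_induction with
    | base => exact fun c hc => hc
    | succ m hm ih => exact fun c hc => hUmono m c (ih c hc)
  have hcover : (Set.univ : Set (ℕ → B)) ⊆ ⋃ n : ℕ, {c : ℕ → B | H^[n] c 0 = q} := by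
    intro c _
    obtain ⟨n, hn⟩ := hnil c
    exact Set.mem_iUnion.mpr ⟨n, congrFun hn 0⟩
  obtain ⟨t, ht⟩ := IsCompact.elim_finite_subcover isCompact_univ _ hUopen hcover
  set N : ℕ := t.sup id with hNdef
  have hN0 : ∀ c : ℕ → B, H^[N] c 0 = q := by
    intro c
    have hm := ht (Set.mem_univ c)
    rw [Set.mem_iUnion₂] at hm
    obtain ⟨n, hnt, hcn⟩ := hm
    exact hUle (Finset.le_sup (f := id) hnt) c hcn
  have hshift : ∀ c : ℕ → B, H (shift c) = shift (H c) := by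
    intro c; funext i
    rw [hH]
    show _ = H c (i + 1)
    rw [hH]
    rfl
  have hshiftIter : ∀ (n : ℕ) (c : ℕ → B), H^[n] (shift c) = shift (H^[n] c) := by
    intro n
    induction n with
    | zero => intro c; rfl
    | succ n ih =>
        intro c
        rw [Function.iterate_succ_apply, Function.iterate_succ_apply, hshift, ih]
  have hNall : ∀ (c : ℕ → B) (i : ℕ), H^[N] c i = q := by
    intro c i
    induction i generalizing c with
    | zero => exact hN0 c
    | succ i ih =>
        have hs := ih (shift c)
        rw [hshiftIter] at hs
        exact hs
  have hNuni : ∀ b : ℕ → B, (ConjAux.Hfun h)^[N] b = fun _ => q := by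
    intro b; funext i; rw [← hHfun]; exact hNall b i
  -- the conjugacy and its inverse
  set φf : (ℕ → A × B) → ℕ → A × B :=
    fun c i => (ConjAux.FIter h q f₀ N (fun j => (c j).2) (fun j => (c j).1) i, (c i).2) with hφf
  set ψf : (ℕ → A × B) → ℕ → A × B :=
    fun c i => (ConjAux.GIter h q g₀ d N (fun j => (c j).2) (fun j => (c j).1) i, (c i).2)
    with hψf
  have hlinv : Function.LeftInverse ψf φf := by
    intro c
    funext i
    show (ConjAux.GIter h q g₀ d N (fun j => (φf c j).2) (fun j => (φf c j).1) i,
      (φf c i).2) = c i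
    have hA : (fun j => (φf c j).1) =
        ConjAux.FIter h q f₀ N (fun j => (c j).2) (fun j => (c j).1) := rfl
    have hB : (fun j => (φf c j).2) = fun j => (c j).2 := rfl
    rw [hA, hB, ConjAux.GIter_FIter I1 Id1]
  have hrinv : Function.RightInverse ψf φf := by
    intro c
    funext i
    show (ConjAux.FIter h q f₀ N (fun j => (ψf c j).2) (fun j => (ψf c j).1) i,
      (ψf c i).2) = c i
    have hA : (fun j => (ψf c j).1) =
        ConjAux.GIter h q g₀ d N (fun j => (c j).2) (fun j => (c j).1) := rfl
    have hB : (fun j => (ψf c j).2) = fun j => (c j).2 := rfl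
    rw [hA, hB, ConjAux.FIter_GIter I1 I2 Id2]
  have contTracks : Continuous (fun c : ℕ → A × B =>
      ((fun j => (c j).2, fun j => (c j).1) : (ℕ → B) × (ℕ → A))) := by
    apply Continuous.prodMk
    · exact continuous_pi fun j => (continuous_apply j).snd
    · exact continuous_pi fun j => (continuous_apply j).fst
  have contφ : Continuous φf := by
    apply continuous_pi; intro i
    apply Continuous.prodMk
    · exact (continuous_apply i).comp ((ConjAux.cont_FIter N).comp contTracks)
    · exact (continuous_apply i).snd
  have contψ : Continuous ψf := by
    apply continuous_pi; intro i
    apply Continuous.prodMk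
    · exact (continuous_apply i).comp ((ConjAux.cont_GIter N).comp contTracks)
    · exact (continuous_apply i).snd
  refine ⟨⟨⟨φf, ψf, hlinv, hrinv⟩, contφ, contψ⟩, ?_, ?_⟩
  · funext c
    show φf (𝓕 c) = 𝓖 (φf c)
    have hAtr : (fun j => (𝓕 c j).1) =
        ConjAux.Fstep h q f₀ (fun j => (c j).2) (fun j => (c j).1) := by
      funext j
      by_cases hc : h ((c j).2, (c (j + 1)).2) = q <;>
        simp [ConjAux.Fstep, h𝓕 c j, hc]
    have hBtr : (fun j => (𝓕 c j).2) = ConjAux.Hfun h (fun j => (c j).2) := by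
      funext j
      by_cases hc : h ((c j).2, (c (j + 1)).2) = q <;>
        simp [ConjAux.Hfun, h𝓕 c j, hc]
    funext i
    show (ConjAux.FIter h q f₀ N (fun j => (𝓕 c j).2) (fun j => (𝓕 c j).1) i,
      (𝓕 c i).2) = 𝓖 (φf c) i
    have h2 : (𝓕 c i).2 = h ((c i).2, (c (i + 1)).2) := by
      rw [h𝓕]; split_ifs <;> rfl
    rw [h𝓖, hAtr, hBtr, ConjAux.FIter_stable hq (hNuni (fun j => (c j).2)), h2]
  · funext c
    funext i
    show (ConjAux.FIter h q f₀ N (fun j => ((shift c) j).2) (fun j => ((shift c) j).1) i,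
      ((shift c) i).2) = shift (φf c) i
    have e1 : (fun j => ((shift c) j).2) = shift (fun j => (c j).2) := rfl
    have e2 : (fun j => ((shift c) j).1) = shift (fun j => (c j).1) := rfl
    rw [e1, e2, ConjAux.FIter_shift]
    rfl
end

section
/- Let H be a radius-1 one-sided CA over a finite alphabet B with local rule h, let q ∈ B be a spreading state for H, and suppose H is NOT nilpotent. Let F₀ be a radius-1 one-sided CA over a finite alphabet A with h((ℕ→A), F₀) > log₂ |B|. Define the radius-1 CA 𝓕 and 𝓖 over A × B as in the construction. Then h((ℕ → A×B), 𝓕) > h((ℕ → A×B), 𝓖). -/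
open Set Uniformity UniformSpace Filter Dynamics
open scoped ENNReal

section Aux

lemma CA_idRel_mem_uniformity (X : Type*) [UniformSpace X] [DiscreteTopology X] [Finite X] :
    SetRel.id ∈ 𝓤 X := by
  haveI : CompactSpace X := Finite.compactSpace
  rw [compactSpace_uniformity, Filter.mem_iSup]
  intro x
  exact IsOpen.mem_nhds (isOpen_discrete _) (by simp)

lemma CA_uniformity_eq (X : Type*) [UniformSpace X] [DiscreteTopology X] [Finite X] :
    𝓤 X = Filter.principal SetRel.id :=
  le_antisymm (Filter.le_principal_iff.2 (CA_idRel_mem_uniformity X)) refl_le_uniformity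

/-- Basic entourages on a one-sided full shift. -/
def CAW (Z : Type*) (k : ℕ) : Set ((ℕ → Z) × (ℕ → Z)) := {p | ∀ i ≤ k, p.1 i = p.2 i}

lemma CAW_mem (Z : Type*) [UniformSpace Z] [DiscreteTopology Z] [Finite Z] (k : ℕ) :
    CAW Z k ∈ 𝓤 (ℕ → Z) := by
  have hW : CAW Z k = ⋂ i ∈ Finset.range (k + 1),
      (fun p : (ℕ → Z) × (ℕ → Z) => (p.1 i, p.2 i)) ⁻¹' SetRel.id := by
    ext p
    simp only [CAW, mem_setOf_eq, mem_iInter, mem_preimage, SetRel.mem_id, Finset.mem_range,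
      Nat.lt_succ_iff]
  rw [hW]
  refine (Filter.biInter_mem (Finset.range (k + 1)).finite_toSet).2 fun i _ => ?_
  rw [Pi.uniformity]
  exact Filter.mem_iInf_of_mem i
    (Filter.preimage_mem_comap (CA_idRel_mem_uniformity Z))

lemma CAW_cofinal (Z : Type*) [UniformSpace Z] [DiscreteTopology Z] [Finite Z]
    {U : Set ((ℕ → Z) × (ℕ → Z))} (hU : U ∈ 𝓤 (ℕ → Z)) : ∃ k, CAW Z k ⊆ U := by
  rw [Pi.uniformity] at hU
  simp only [CA_uniformity_eq Z, Filter.comap_principal] at hU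
  rcases (Filter.hasBasis_iInf_principal_finite _).mem_iff.1 hU with ⟨t, t_fin, ht⟩
  rcases t_fin.bddAbove with ⟨k, hk⟩
  refine ⟨k, fun p hp => ht (mem_iInter₂.2 fun i hi => ?_)⟩
  simp only [mem_preimage, SetRel.mem_id]
  exact hp i (hk hi)

variable {B : Type} (h : B × B → B) (q : B) (H : (ℕ → B) → ℕ → B)
  (hH : ∀ c i, H c i = h (c i, c (i + 1)))

include hH in
lemma CA_iter_local : ∀ (m : ℕ) (b b' : ℕ → B) (j : ℕ),
    (∀ p, p ≤ j + m → b p = b' p) → H^[m] b j = H^[m] b' j := by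
  intro m
  induction m with
  | zero => intro b b' j hb; simpa using hb j (by omega)
  | succ m ih =>
    intro b b' j hb
    rw [Function.iterate_succ_apply, Function.iterate_succ_apply]
    refine ih (H b) (H b') j fun p hp => ?_
    rw [hH, hH, hb p (by omega), hb (p + 1) (by omega)]

include hH in
lemma CA_shift_iter (i : ℕ) : ∀ (m : ℕ) (c : ℕ → B),
    H^[m] (fun p => c (p + i)) = fun p => H^[m] c (p + i) := by
  intro m
  induction m with
  | zero => intro c; rfl
  | succ m ih =>
    intro c
    rw [Function.iterate_succ_apply, Function.iterate_succ_apply]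
    have : H (fun p => c (p + i)) = fun p => H c (p + i) := by
      funext p
      rw [hH, hH]
      have : p + i + 1 = p + 1 + i := by omega
      rw [this]
    rw [this, ih]

variable (hspread : ∀ b b' : B, b = q ∨ b' = q → h (b, b') = q)

include hH hspread in
lemma CA_q_persist {m p : ℕ} {b : ℕ → B} (hq : H^[m] b p = q) : H^[m + 1] b p = q := by
  rw [Function.iterate_succ_apply', hH]
  exact hspread _ _ (Or.inl hq)

include hH hspread in
lemma CA_q_left {m p : ℕ} {b : ℕ → B} (hq : H^[m] b (p + 1) = q) : H^[m + 1] b p = q := by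
  rw [Function.iterate_succ_apply', hH]
  exact hspread _ _ (Or.inr hq)

include hH hspread in
lemma CA_q_down {b : ℕ → B} : ∀ (j m p : ℕ), H^[m] b (p + j) = q → H^[m + j] b p = q := by
  intro j
  induction j with
  | zero => intro m p hq; simpa using hq
  | succ j ih =>
    intro m p hq
    have h1 : H^[m + 1] b (p + j) = q := by
      refine CA_q_left h q H hH hspread ?_
      have : p + j + 1 = p + (j + 1) := by omega
      rw [this]; exact hq
    have := ih (m + 1) p h1
    have e : m + 1 + j = m + (j + 1) := by omega
    rw [e] at this; exact this

include hH hspread in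
lemma CA_q_persist_many {b : ℕ → B} {m n p : ℕ} (hmn : m ≤ n) (hq : H^[m] b p = q) :
    H^[n] b p = q := by
  obtain ⟨d, rfl⟩ := Nat.exists_eq_add_of_le hmn
  induction d with
  | zero => simpa using hq
  | succ d ih =>
    have e : m + (d + 1) = (m + d) + 1 := by omega
    rw [e]
    exact CA_q_persist h q H hH hspread (ih (Nat.le_add_right m d))

end Aux

section Exist

variable {B : Type} [DecidableEq B] [Fintype B] [Nonempty B] [UniformSpace B] [DiscreteTopology B]
  (h : B × B → B) (q : B) (H : (ℕ → B) → ℕ → B)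
  (hH : ∀ c i, H c i = h (c i, c (i + 1)))
  (hspread : ∀ b b' : B, b = q ∨ b' = q → h (b, b') = q)

include hH in
lemma CA_H_continuous : Continuous H := by
  have : H = fun b => fun i => h (b i, b (i + 1)) := by
    funext b i; exact hH b i
  rw [this]
  exact continuous_pi fun i => Continuous.comp continuous_of_discreteTopology
    ((continuous_apply i).prodMk (continuous_apply (i + 1)))

include hH hspread in
lemma CA_exists_qfree
    (hnotnilp : ¬ ∃ q' : B, H (fun _ => q') = (fun _ => q') ∧
      ∀ c, ∃ n, H^[n] c = fun _ => q') :
    ∃ b : ℕ → B, ∀ m i, H^[m] b i ≠ q := by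
  -- q is quiescent
  have hquies : H (fun _ => q) = fun _ => q := by
    funext i; rw [hH]; exact hspread _ _ (Or.inl rfl)
  push_neg at hnotnilp
  obtain ⟨c, hc⟩ := hnotnilp q hquies
  -- for each n, a configuration whose evolution avoids q in the triangle m + j ≤ n
  have key : ∀ n, ∃ b : ℕ → B, ∀ m j, m + j ≤ n → H^[m] b j ≠ q := by
    intro n
    have : H^[n] c ≠ fun _ => q := hc n
    rw [Function.ne_iff] at this
    obtain ⟨i, hi⟩ := this
    refine ⟨fun p => c (p + i), fun m j hmj hq => ?_⟩
    rw [CA_shift_iter h H hH i m c] at hq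
    have h1 : H^[m + j] c i = q := by
      refine CA_q_down h q H hH hspread j m i ?_
      have e : i + j = j + i := by omega
      rw [e]; exact hq
    exact hi (CA_q_persist_many h q H hH hspread hmj h1)
  -- compactness
  set C : ℕ → Set (ℕ → B) := fun n => {b | ∀ m j, m + j ≤ n → H^[m] b j ≠ q} with hC
  have Ccl : ∀ n, IsClosed (C n) := by
    intro n
    have : C n = ⋂ m, ⋂ j, ⋂ (_ : m + j ≤ n), (fun b => H^[m] b j) ⁻¹' ({q}ᶜ) := by
      ext b; simp [hC]
    rw [this]
    refine isClosed_iInter fun m => isClosed_iInter fun j => isClosed_iInter fun _ => ?_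
    exact IsClosed.preimage ((continuous_apply j).comp
      ((CA_H_continuous h H hH).iterate m)) (isOpen_discrete _).isClosed_compl
  have Cne : ∀ n, (C n).Nonempty := by
    intro n; obtain ⟨b, hb⟩ := key n; exact ⟨b, hb⟩
  have Cmono : ∀ n, C (n + 1) ⊆ C n := by
    intro n b hb m j hmj; exact hb m j (by omega)
  have := IsCompact.nonempty_iInter_of_sequence_nonempty_isCompact_isClosed C Cmono Cne
    ((Ccl 0).isCompact) Ccl
  obtain ⟨b, hb⟩ := this
  simp only [mem_iInter] at hb
  exact ⟨b, fun m i => hb (m + i) m i le_rfl⟩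

end Exist

section Mono

lemma CA_coverMincard_mono_set {X : Type*} (T : X → X) {F G : Set X} (hFG : F ⊆ G)
    (U : Set (X × X)) (n : ℕ) : coverMincard T F U n ≤ coverMincard T G U n := by
  refine le_iInf₂ fun s hs => ?_
  exact IsDynCoverOf.coverMincard_le_card (Subset.trans hFG hs)

lemma CA_coverEntropy_mono_set {X : Type*} [UniformSpace X] (T : X → X) {F G : Set X}
    (hFG : F ⊆ G) : coverEntropy T F ≤ coverEntropy T G := by
  refine iSup₂_mono fun U _ => ?_
  refine limsup_le_limsup (Eventually.of_forall fun n => ?_)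
  exact EReal.monotone_div_right_of_nonneg (Nat.cast_nonneg' n)
    (ENNReal.log_monotone (ENat.toENNReal_mono (CA_coverMincard_mono_set T hFG U n)))

end Mono

section Upper

set_option linter.unusedSectionVars false

variable {A B : Type} [Fintype A] [Nonempty A] [UniformSpace A] [DiscreteTopology A]
  [Fintype B] [Nonempty B] [UniformSpace B] [DiscreteTopology B]
  (h : B × B → B) (H : (ℕ → B) → ℕ → B)
  (hH : ∀ c i, H c i = h (c i, c (i + 1)))
  (𝓖 : (ℕ → A × B) → ℕ → A × B)
  (h𝓖 : ∀ c i, 𝓖 c i = ((c i).1, h ((c i).2, (c (i + 1)).2)))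

include hH h𝓖 in
lemma CA_G_iter : ∀ (m : ℕ) (c : ℕ → A × B) (i : ℕ),
    𝓖^[m] c i = ((c i).1, H^[m] (fun j => (c j).2) i) := by
  intro m
  induction m with
  | zero => intro c i; rfl
  | succ m ih =>
    intro c i
    rw [Function.iterate_succ_apply', h𝓖, ih c i, ih c (i + 1),
      Function.iterate_succ_apply', hH]

include hH h𝓖 in
lemma CA_coverMincard_G_le (k n : ℕ) :
    coverMincard 𝓖 Set.univ (CAW (A × B) k) n ≤
      ((Fintype.card A ^ (k + 1) * Fintype.card B ^ (k + n) : ℕ) : ℕ∞) := by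
  classical
  set Φ : ((Fin (k + 1) → A) × (Fin (k + n) → B)) → (ℕ → A × B) := fun uv i =>
    (if hi : i < k + 1 then uv.1 ⟨i, hi⟩ else Classical.arbitrary A,
     if hi : i < k + n then uv.2 ⟨i, hi⟩ else Classical.arbitrary B) with hΦ
  set s : Finset (ℕ → A × B) := Finset.image Φ Finset.univ with hs
  have hcover : IsDynCoverOf 𝓖 Set.univ (CAW (A × B) k) n (s : Set (ℕ → A × B)) := by
    intro c _
    set x := Φ (fun p => (c p.val).1, fun p => (c p.val).2) with hx
    refine ⟨x, ?_, ?_⟩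
    · exact Finset.mem_image_of_mem Φ (Finset.mem_univ _)
    · rw [mem_dynEntourage]
      intro m hm i hi
      show 𝓖^[m] c i = 𝓖^[m] x i
      rw [CA_G_iter h H hH 𝓖 h𝓖 m x i, CA_G_iter h H hH 𝓖 h𝓖 m c i]
      have hfst : (x i).1 = (c i).1 := by
        rw [hx, hΦ]; simp only; rw [dif_pos (by omega : i < k + 1)]
      have hsnd : H^[m] (fun j => (x j).2) i = H^[m] (fun j => (c j).2) i := by
        refine CA_iter_local h H hH m _ _ i fun p hp => ?_
        rw [hx, hΦ]; simp only; rw [dif_pos (by omega : p < k + n)]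
      rw [hfst, hsnd]
  have hcard : s.card ≤ Fintype.card A ^ (k + 1) * Fintype.card B ^ (k + n) := by
    refine (Finset.card_image_le).trans ?_
    rw [Finset.card_univ, Fintype.card_prod, Fintype.card_fun, Fintype.card_fun,
      Fintype.card_fin, Fintype.card_fin]
  exact hcover.coverMincard_le_card.trans (by exact_mod_cast hcard)

include hH h𝓖 in
lemma CA_coverEntropy_G_le :
    coverEntropy 𝓖 Set.univ ≤ (Real.log (Fintype.card B) : EReal) := by
  refine iSup₂_le fun U hU => ?_
  obtain ⟨k, hk⟩ := CAW_cofinal (A × B) hU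
  refine (coverEntropyEntourage_antitone 𝓖 Set.univ hk).trans ?_
  -- bound the entourage entropy of `CAW k`
  set la := Real.log (Fintype.card A) with hla
  set lb := Real.log (Fintype.card B) with hlb
  have hA1 : (1 : ℕ) ≤ Fintype.card A := Fintype.card_pos
  have hB1 : (1 : ℕ) ≤ Fintype.card B := Fintype.card_pos
  set r : ℕ → ℝ := fun n => (((k + 1) * la + k * lb) / n + lb) with hr
  have hrt : Filter.Tendsto r Filter.atTop (nhds lb) := by
    have := (tendsto_const_div_atTop_nhds_zero_nat ((k + 1) * la + k * lb)).add_const lb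
    rw [zero_add] at this
    exact this
  have hlim : Filter.atTop.limsup (fun n : ℕ => ((r n : ℝ) : EReal)) = (lb : EReal) :=
    Filter.Tendsto.limsup_eq (EReal.tendsto_coe.2 hrt)
  rw [← hlim]
  refine Filter.limsup_le_limsup ?_
  filter_upwards [Filter.eventually_ge_atTop 1] with n hn
  set N : ℕ := Fintype.card A ^ (k + 1) * Fintype.card B ^ (k + n) with hN
  have hrn : r n = Real.log N / n := by
    have hNpos : (0 : ℝ) < N := by positivity
    rw [hr, hN]
    push_cast
    rw [Real.log_mul (by positivity) (by positivity), Real.log_pow, Real.log_pow]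
    field_simp
    rw [hla, hlb]; push_cast; ring
  have step1 : ENNReal.log (coverMincard 𝓖 Set.univ (CAW (A × B) k) n) ≤
      ENNReal.log ((N : ℝ≥0∞)) := by
    refine ENNReal.log_monotone ?_
    have := CA_coverMincard_G_le h H hH 𝓖 h𝓖 k n
    exact_mod_cast ENat.toENNReal_mono this
  have step2 : ENNReal.log ((N : ℝ≥0∞)) = ((Real.log N : ℝ) : EReal) := by
    rw [ENNReal.log_pos_real' (by simp [hN]; positivity), ENNReal.toReal_natCast]
  calc ENNReal.log (coverMincard 𝓖 Set.univ (CAW (A × B) k) n) / (n : EReal)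
      ≤ ENNReal.log ((N : ℝ≥0∞)) / (n : EReal) :=
        EReal.monotone_div_right_of_nonneg (Nat.cast_nonneg' n) step1
    _ = ((r n : ℝ) : EReal) := by
        rw [step2, hrn, EReal.coe_div]
        norm_cast
end Upper

/-- If `H` is a non-nilpotent radius-1 one-sided CA over `B` with spreading state `q`, and `F₀`
is a radius-1 one-sided CA over `A` whose topological entropy exceeds `log |B|` (base-2 entropy
exceeding `log₂ |B|`, stated here in natural-logarithm units), then the CA `𝓕` and `𝓖` over
`A × B` of the construction satisfy `h(𝓕) > h(𝓖)`. -/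
theorem construction_entropy_gap_of_not_nilpotent
    {A B : Type} [DecidableEq B] [Fintype A] [Nonempty A] [UniformSpace A] [DiscreteTopology A]
    [Fintype B] [Nonempty B] [UniformSpace B] [DiscreteTopology B]
    (h : B × B → B) (q : B) (f₀ : A × A → A)
    (H : (ℕ → B) → ℕ → B) (F₀ : (ℕ → A) → ℕ → A)
    (hH : ∀ c i, H c i = h (c i, c (i + 1)))
    (hF₀ : ∀ c i, F₀ c i = f₀ (c i, c (i + 1)))
    -- `q` is a spreading state for `H`
    (hspread : ∀ b b' : B, b = q ∨ b' = q → h (b, b') = q)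
    -- `H` is NOT nilpotent
    (hnotnilp : ¬ ∃ q' : B, H (fun _ => q') = (fun _ => q') ∧ ∀ c, ∃ n, H^[n] c = fun _ => q')
    -- `F₀` has topological entropy greater than `log₂ |B|` (in base-2), i.e. greater than
    -- `log |B|` in natural-logarithm units
    (hent : (Real.log (Fintype.card B) : EReal) < Dynamics.coverEntropy F₀ Set.univ)
    -- the CA `𝓕` and `𝓖` of the construction
    (𝓕 𝓖 : (ℕ → A × B) → ℕ → A × B)
    (h𝓖 : ∀ c i, 𝓖 c i = ((c i).1, h ((c i).2, (c (i + 1)).2)))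
    (h𝓕 : ∀ c i, 𝓕 c i =
      if h ((c i).2, (c (i + 1)).2) = q then ((c i).1, h ((c i).2, (c (i + 1)).2))
      else (f₀ ((c i).1, (c (i + 1)).1), h ((c i).2, (c (i + 1)).2))) :
    Dynamics.coverEntropy 𝓖 Set.univ < Dynamics.coverEntropy 𝓕 Set.univ := by
  classical
  obtain ⟨bs, hbs⟩ := CA_exists_qfree h q H hH hspread hnotnilp
  have hsnd : ∀ c, (fun j => ((𝓕 c) j).2) = H (fun j => (c j).2) := by
    intro c; funext j
    rw [hH, h𝓕]
    split <;> rfl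
  set G : Set (ℕ → A × B) := {c | ∀ m i, H^[m] (fun j => (c j).2) i ≠ q} with hG
  have hGinv : Set.MapsTo 𝓕 G G := by
    intro c hc m i
    rw [hsnd c, ← Function.iterate_succ_apply]
    exact hc (m + 1) i
  set φ : G → (ℕ → A) := fun c => fun i => ((c : ℕ → A × B) i).1 with hφ
  have hφuc : UniformContinuous φ := uniformContinuous_pi.2 fun i =>
    uniformContinuous_fst.comp
      ((Pi.uniformContinuous_proj _ i).comp uniformContinuous_subtype_val)
  have hsemi : Function.Semiconj φ (hGinv.restrict 𝓕 G G) F₀ := by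
    intro x
    funext i
    show ((𝓕 x) i).1 = F₀ (φ x) i
    have hne : h (((x : ℕ → A × B) i).2, ((x : ℕ → A × B) (i + 1)).2) ≠ q := by
      have := x.2 1 i
      simpa [Function.iterate_one, hH] using this
    rw [h𝓕, if_neg hne, hF₀]
  have hsurj : φ '' Set.univ = Set.univ := by
    refine Set.eq_univ_of_forall fun a => ?_
    refine ⟨⟨fun i => (a i, bs i), fun m i => by simpa using hbs m i⟩, Set.mem_univ _, rfl⟩
  have hlow : Dynamics.coverEntropy F₀ Set.univ ≤ Dynamics.coverEntropy 𝓕 Set.univ := by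
    calc Dynamics.coverEntropy F₀ Set.univ
        = Dynamics.coverEntropy F₀ (φ '' Set.univ) := by rw [hsurj]
      _ ≤ Dynamics.coverEntropy (hGinv.restrict 𝓕 G G) Set.univ :=
          coverEntropy_image_le_of_uniformContinuous hsemi hφuc Set.univ
      _ = Dynamics.coverEntropy 𝓕 G := coverEntropy_restrict hGinv
      _ ≤ Dynamics.coverEntropy 𝓕 Set.univ := CA_coverEntropy_mono_set 𝓕 (Set.subset_univ G)
  exact lt_of_le_of_lt (CA_coverEntropy_G_le h H hH 𝓖 h𝓖) (lt_of_lt_of_le hent hlow)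
end

section
/- Let F be a one-sided CA over a finite alphabet A of radius r, let s ∈ A be a spreading state for F, and suppose F is not nilpotent. Then there exists a configuration c : ℕ → A such that F^n(c)(j) ≠ s for all n ∈ ℕ and all j ∈ ℕ. -/
/-- If `F` is a radius-`r` one-sided CA over a finite alphabet with a spreading state `s`, and
`F` is not nilpotent, then some configuration `c` avoids `s` in its whole orbit:
`F^n(c)(j) ≠ s` for all `n` and `j`. -/
theorem exists_orbit_avoiding_spreading_state_of_not_nilpotent
    {A : Type} [Fintype A] [Nonempty A] {r : ℕ}
    (f : (Fin (r + 1) → A) → A) (F : (ℕ → A) → ℕ → A)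
    (hF : ∀ c i, F c i = f fun k => c (i + (k : ℕ)))
    (s : A)
    -- `s` is a spreading state: the local rule maps every neighborhood containing `s` to `s`
    (hs : ∀ u : Fin (r + 1) → A, (∃ k, u k = s) → f u = s)
    -- `F` is not nilpotent
    (hnotnilp : ¬ ∃ q : A, F (fun _ => q) = (fun _ => q) ∧ ∀ c, ∃ n, F^[n] c = fun _ => q) :
    ∃ c : ℕ → A, ∀ n j : ℕ, F^[n] c j ≠ s := by
  classical
  -- backward propagation: if F d i ≠ s then d has no s in the window [i, i+r]
  have hback : ∀ (d : ℕ → A) (i k : ℕ), k ≤ r → F d i ≠ s → d (i + k) ≠ s := by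
    intro d i k hk hne hds
    exact hne (by rw [hF]; exact hs _ ⟨⟨k, Nat.lt_succ_of_le hk⟩, hds⟩)
  -- locality of F^[m]
  have hloc : ∀ (m : ℕ) (c c' : ℕ → A) (i : ℕ),
      (∀ t ≤ m * r, c (i + t) = c' (i + t)) → F^[m] c i = F^[m] c' i := by
    intro m
    induction m with
    | zero => intro c c' i h; simpa using h 0 (by simp)
    | succ m ih =>
      intro c c' i h
      rw [Function.iterate_succ_apply, Function.iterate_succ_apply]
      apply ih
      intro t ht
      rw [hF, hF]
      congr 1
      funext k
      have hk : (k : ℕ) ≤ r := Fin.is_le k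
      have hmr : (m + 1) * r = m * r + r := Nat.succ_mul m r
      have := h (t + (k : ℕ)) (by omega)
      simpa [add_assoc] using this
  -- const s is fixed
  have hfix : F (fun _ => s) = fun _ => s := by
    funext i; rw [hF]; exact hs _ ⟨0, rfl⟩
  -- non-nilpotency yields a configuration whose orbit never becomes const s
  obtain ⟨c, hc⟩ : ∃ c, ∀ n, F^[n] c ≠ fun _ => s := by
    by_contra h
    push_neg at h
    exact hnotnilp ⟨s, hfix, h⟩
  have hj : ∀ n, ∃ j, F^[n] c j ≠ s := by
    intro n
    by_contra h'
    push_neg at h'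
    exact hc n (funext h')
  choose j hjs using hj
  -- triangle lemma
  have htri : ∀ (dd n m : ℕ), m + dd = n → ∀ t ≤ dd * r, F^[m] c (j n + t) ≠ s := by
    intro dd
    induction dd with
    | zero =>
      intro n m hmn t ht
      have : t = 0 := by omega
      subst this
      have : m = n := by omega
      subst this
      simpa using hjs m
    | succ dd ih =>
      intro n m hmn t ht
      have ih' := ih n (m + 1) (by omega)
      set t' := min t (dd * r) with ht'
      have hle : t' ≤ t := min_le_left _ _
      have hk : t - t' ≤ r := by
        have hmr : (dd + 1) * r = dd * r + r := Nat.succ_mul dd r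
        omega
      have h1 : F^[m + 1] c (j n + t') ≠ s := ih' t' (min_le_right _ _)
      rw [Function.iterate_succ_apply'] at h1
      have h2 := hback (F^[m] c) (j n + t') (t - t') hk h1
      have : j n + t' + (t - t') = j n + t := by omega
      rwa [this] at h2
  -- main claim: for each n there is a config avoiding s on the square [0,n] × [0,n]
  have hclaim : ∀ n, ∃ d : ℕ → A, ∀ m ≤ n, ∀ i ≤ n, F^[m] d i ≠ s := by
    intro n
    rcases Nat.eq_zero_or_pos r with hr | hr
    · -- radius 0: F acts coordinatewise
      subst hr
      set g : A → A := fun b => f (fun _ => b) with hg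
      have hgF : ∀ (d : ℕ → A) (i : ℕ), F d i = g (d i) := by
        intro d i
        rw [hF, hg]
        congr 1
        funext k
        have : (k : ℕ) = 0 := by omega
        simp [this]
      have hit : ∀ (m : ℕ) (d : ℕ → A) (i : ℕ), F^[m] d i = g^[m] (d i) := by
        intro m
        induction m with
        | zero => intro d i; simp
        | succ m ih =>
          intro d i
          rw [Function.iterate_succ_apply', Function.iterate_succ_apply', hgF, ih d i]
      refine ⟨fun _ => c (j n), ?_⟩
      intro m hm i _
      rw [hit m]
      have := htri (n - m) n m (by omega) 0 (by omega)
      rw [hit m] at this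
      simpa using this
    · -- radius ≥ 1: use a shift of c
      have hcomm : ∀ (e : ℕ → A) (a : ℕ), F (fun t => e (a + t)) = fun t => F e (a + t) := by
        intro e a
        funext i
        rw [hF, hF]
        congr 1
        funext k
        rw [add_assoc]
      have hshift : ∀ (m : ℕ) (e : ℕ → A) (a i : ℕ),
          F^[m] (fun t => e (a + t)) i = F^[m] e (a + i) := by
        intro m
        induction m with
        | zero => intro e a i; simp
        | succ m ih =>
          intro e a i
          rw [Function.iterate_succ_apply, hcomm, ih, Function.iterate_succ_apply]
      refine ⟨fun t => c (j (2 * n) + t), ?_⟩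
      intro m hm i hi
      rw [hshift]
      apply htri (2 * n - m) (2 * n) m (by omega)
      calc i ≤ n := hi
        _ ≤ (2 * n - m) * 1 := by omega
        _ ≤ (2 * n - m) * r := Nat.mul_le_mul_left _ hr
  choose d hd using hclaim
  -- take an ultrafilter limit
  set U := Ultrafilter.of (Filter.atTop : Filter ℕ) with hUdef
  have hU : ∀ g : ℕ → A, ∃ a, {n | g n = a} ∈ U := by
    intro g
    by_contra h
    push_neg at h
    have h1 : ∀ a : A, {n | g n = a}ᶜ ∈ U := fun a =>
      (Ultrafilter.compl_mem_iff_notMem).mpr (h a)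
    have h2 : (⋂ a : A, {n | g n = a}ᶜ) ∈ U := Filter.iInter_mem.mpr h1
    have h3 : (⋂ a : A, {n | g n = a}ᶜ) = ∅ := by
      ext n; simp
    rw [h3] at h2
    exact Filter.empty_notMem (U : Filter ℕ) h2
  choose val hval using fun i => hU (fun n => d n i)
  refine ⟨val, ?_⟩
  intro m i
  -- a U-large set of good indices
  have hS : ({n | m ≤ n} ∩ {n | i ≤ n} ∩ ⋂ t ∈ Finset.range (m * r + 1),
      {n | d n (i + t) = val (i + t)}) ∈ U := by
    refine Filter.inter_mem (Filter.inter_mem ?_ ?_) ?_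
    · exact Ultrafilter.of_le _ (Filter.mem_atTop m)
    · exact Ultrafilter.of_le _ (Filter.mem_atTop i)
    · exact (Filter.biInter_finset_mem _).mpr fun t _ => hval (i + t)
  obtain ⟨n, hn⟩ := Ultrafilter.nonempty_of_mem hS
  obtain ⟨⟨hn1, hn2⟩, hn3⟩ := hn
  have heq : F^[m] val i = F^[m] (d n) i := by
    apply hloc
    intro t ht
    have := Set.mem_iInter₂.mp hn3 t (Finset.mem_range.mpr (by omega))
    exact this.symm
  rw [heq]
  exact hd n m hn1 i hn2
end

section
/- Let F be a one-sided CA over a finite alphabet A which is nilpotent, i.e., there is a quiescent state q such that for every configuration c there is some n with F^n(c) = const q. Then F is uniformly nilpotent: there exists a single n ∈ ℕ such that F^n(c) = const q for ALL configurations c : ℕ → A. -/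
theorem shift_iterate_apply {A : Type*} (c : ℕ → A) (k i : ℕ) :
    shift^[k] c i = c (i + k) := by
  induction k generalizing c i with
  | zero => rfl
  | succ k ih =>
    rw [Function.iterate_succ_apply, ih]
    simp [shift, Nat.add_assoc, Nat.add_comm 1 k]

/-- A nilpotent one-sided cellular automaton over a finite alphabet is uniformly nilpotent:
if every configuration reaches the quiescent constant configuration `const q` after finitely
many steps, then there is a single `n` that works for all configurations. -/
theorem nilpotent_CA_uniformly_nilpotent
    {A : Type} [Fintype A] [Nonempty A] [TopologicalSpace A] [DiscreteTopology A]
    (F : (ℕ → A) → ℕ → A) (hcont : Continuous F) (hshift : F ∘ shift = shift ∘ F)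
    (q : A)
    -- `q` is quiescent
    (hq : F (fun _ => q) = fun _ => q)
    -- `F` is nilpotent with quiescent state `q`
    (hnilp : ∀ c : ℕ → A, ∃ n : ℕ, F^[n] c = fun _ => q) :
    ∃ n : ℕ, ∀ c : ℕ → A, F^[n] c = fun _ => q := by
  -- the sets U n are closed and cover the space
  set U : ℕ → Set (ℕ → A) := fun n => {c | F^[n] c = fun _ => q} with hU
  have hclosed : ∀ n, IsClosed (U n) :=
    fun n => (isClosed_singleton (x := (fun _ => q : ℕ → A))).preimage (hcont.iterate n)
  have hcover : ⋃ n, U n = Set.univ := by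
    ext c; simp only [Set.mem_iUnion, Set.mem_univ, iff_true]
    exact hnilp c
  obtain ⟨N, c₀, hc₀⟩ := nonempty_interior_of_iUnion_of_closed hclosed hcover
  -- extract a cylinder inside U N
  obtain ⟨I, u, hIu, hsub⟩ := (isOpen_pi_iff.mp isOpen_interior) c₀ hc₀
  set k : ℕ := if h : I.Nonempty then I.max' h + 1 else 0 with hk
  have hIk : ∀ i ∈ I, i < k := by
    intro i hi
    have hne : I.Nonempty := ⟨i, hi⟩
    rw [hk]; rw [dif_pos hne]
    exact Nat.lt_succ_of_le (I.le_max' i hi)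
  have hcyl : ∀ c : ℕ → A, (∀ i < k, c i = c₀ i) → c ∈ U N := by
    intro c hc
    apply interior_subset (s := U N)
    apply hsub
    intro i hi
    have := (hIu i hi).2
    rw [hc i (hIk i hi)]
    exact this
  -- commutation of iterates
  have hcomm : ∀ c : ℕ → A, ∀ m j : ℕ, F^[m] (shift^[j] c) = shift^[j] (F^[m] c) := by
    intro c m j
    have h1 : Function.Commute F shift := fun x => congrFun hshift x
    exact (h1.iterate_iterate m j) c
  refine ⟨N, fun c => ?_⟩
  -- prepend the word c₀|k to c
  set c' : ℕ → A := fun i => if h : i < k then c₀ i else c (i - k) with hc'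
  have hmem : c' ∈ U N := hcyl c' (fun i hi => by simp [hc', hi])
  have hshiftc : shift^[k] c' = c := by
    funext j
    rw [shift_iterate_apply]
    simp [hc']
  have : F^[N] c = shift^[k] (F^[N] c') := by
    rw [← hcomm c' N k, hshiftc]
  rw [this, hmem]
  funext j
  rw [shift_iterate_apply]
end

section
/- Let F be a one-sided CA over a finite alphabet A of radius r with r ≥ 1. Then the topological entropy of F equals the topological entropy of the shift on its r-th trace subshift: h((ℕ → A), F) = h(τ_r(F), σ). -/
/-- The `n`-th trace subshift of `F`: the set of sequences of width-`n` windows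
`i ↦ (F^i(c)(0), …, F^i(c)(n-1))` read off orbits of `F`. -/
def traceSubshift {A : Type*} (F : (ℕ → A) → ℕ → A) (n : ℕ) : Set (ℕ → (Fin n → A)) :=
  { t | ∃ c : ℕ → A, ∀ (i : ℕ) (k : Fin n), t i k = F^[i] c (k : ℕ) }

open Filter Uniformity UniformSpace Set Dynamics

namespace TEAux
set_option linter.unusedSectionVars false
set_option linter.unusedVariables false

def pat {B : Type} (T : (ℕ → B) → ℕ → B) (n m : ℕ) (x : ℕ → B) : Fin n → Fin m → B :=
  fun j i => T^[j] x i


def pE (B : Type) (m : ℕ) : Set ((ℕ → B) × (ℕ → B)) := {p | ∀ i < m, p.1 i = p.2 i}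

variable {B : Type} [Fintype B] [UniformSpace B] [DiscreteTopology B]

lemma uniformity_discrete : 𝓤 B = 𝓟 SetRel.id := by
  rw [compactSpace_uniformity]
  apply le_antisymm
  · refine iSup_le fun x => ?_
    rw [nhds_discrete]
    exact le_principal_iff.2 (mem_pure.2 rfl)
  · refine le_def.2 fun s hs => ?_
    simp only [Filter.mem_iSup, nhds_discrete, mem_pure] at hs
    refine mem_principal.2 fun p hp => ?_
    rcases p with ⟨x, y⟩
    rw [SetRel.mem_id] at hp
    subst hp
    exact hs x

lemma pE_antitone {m m' : ℕ} (h : m ≤ m') : pE B m' ⊆ pE B m :=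
  fun p hp i hi => hp i (lt_of_lt_of_le hi h)

lemma uniformity_pi_eq : 𝓤 (ℕ → B) = ⨅ m : ℕ, 𝓟 (pE B m) := by
  rw [Pi.uniformity]
  simp only [uniformity_discrete, Filter.comap_principal]
  apply le_antisymm
  · refine le_iInf fun m => le_principal_iff.2 ?_
    have : pE B m = ⋂ i ∈ Finset.range m, (fun p : (ℕ → B) × (ℕ → B) => (p.1 i, p.2 i)) ⁻¹' SetRel.id := by
      ext p
      simp [pE, SetRel.mem_id]
    rw [this]
    refine (Filter.biInter_finset_mem _).2 fun i _ => ?_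
    exact mem_iInf_of_mem i (mem_principal_self _)
  · refine le_iInf fun i => ?_
    refine iInf_le_of_le (i + 1) (principal_mono.2 ?_)
    intro p hp
    simp only [mem_preimage, SetRel.mem_id]
    exact hp i (Nat.lt_succ_self i)

lemma hasBasis_pE : (𝓤 (ℕ → B)).HasBasis (fun _ : ℕ => True) (pE B) := by
  rw [uniformity_pi_eq]
  exact hasBasis_iInf_principal (directed_of_isDirected_le (fun m m' h => pE_antitone h))

lemma pE_mem (m : ℕ) : pE B m ∈ 𝓤 (ℕ → B) := hasBasis_pE.mem_of_mem trivial


variable {B : Type} [Fintype B] [UniformSpace B] [DiscreteTopology B]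

lemma mem_dyn_pE_iff {T : (ℕ → B) → ℕ → B} {n m : ℕ} {x y : ℕ → B} :
    (x, y) ∈ dynEntourage T (pE B m) n ↔ pat T n m x = pat T n m y := by
  rw [mem_dynEntourage]
  constructor
  · intro h
    funext j i
    exact h j j.2 i i.2
  · intro h k hk i hi
    exact congrFun (congrFun h ⟨k, hk⟩) ⟨i, hi⟩

lemma coverMincard_eq_pat (T : (ℕ → B) → ℕ → B) (S : Set (ℕ → B)) (n m : ℕ) :
    coverMincard T S (pE B m) n = ((pat T n m '' S).ncard : ℕ∞) := by
  classical
  apply le_antisymm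
  · -- choose reps
    have hQ : (pat T n m '' S).Finite := Set.toFinite _
    have hsel : ∀ q ∈ hQ.toFinset, ∃ x, x ∈ S ∧ pat T n m x = q := by
      intro q hq
      rw [Set.Finite.mem_toFinset, Set.mem_image] at hq
      exact hq
    set s : Finset (ℕ → B) :=
      hQ.toFinset.attach.image (fun q => (hsel q.1 q.2).choose) with hs
    have hcov : IsDynCoverOf T S (pE B m) n s := by
      intro x hx
      have hmem : pat T n m x ∈ hQ.toFinset := by
        rw [Set.Finite.mem_toFinset]
        exact ⟨x, hx, rfl⟩
      refine ⟨(hsel _ hmem).choose, ?_, ?_⟩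
      · simp only [hs, Finset.coe_image, Set.mem_image]
        exact ⟨⟨_, hmem⟩, Finset.mem_coe.2 (Finset.mem_attach _ _), rfl⟩
      · rw [mem_dyn_pE_iff]
        exact (hsel _ hmem).choose_spec.2.symm
    refine (hcov.coverMincard_le_card).trans ?_
    rw [Nat.cast_le]
    refine (Finset.card_image_le).trans ?_
    rw [Finset.card_attach, Set.ncard_eq_toFinset_card _ hQ]
  · refine le_iInf₂ fun s hcov => ?_
    rw [Nat.cast_le]
    have h1 : pat T n m '' S ⊆ pat T n m '' ↑s := by
      rintro _ ⟨x, hx, rfl⟩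
      rcases hcov hx with ⟨y, hy, hball⟩
      rw [mem_dyn_pE_iff] at hball
      exact ⟨y, hy, hball.symm⟩
    refine (Set.ncard_le_ncard h1 (Set.toFinite _)).trans ?_
    refine (Set.ncard_image_le (Set.toFinite _)).trans ?_
    rw [Set.ncard_coe_finset]


noncomputable def Pc {A : Type} (F : (ℕ → A) → ℕ → A) (n m : ℕ) : ℕ :=
  (Set.range (pat F n m)).ncard

section CA
variable {A : Type} [Fintype A] [Nonempty A] {r : ℕ}
  {f : (Fin (r + 1) → A) → A} {F : (ℕ → A) → ℕ → A}

lemma shift_iterate {B : Type*} (t : ℕ → B) (j i : ℕ) : shift^[j] t i = t (i + j) := by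
  induction j generalizing t with
  | zero => rfl
  | succ j ih =>
    rw [Function.iterate_succ_apply, ih]
    rfl

lemma F_shift (hF : ∀ c i, F c i = f fun k => c (i + (k : ℕ))) (c : ℕ → A) :
    F (shift c) = shift (F c) := by
  funext i
  rw [hF, shift, hF]
  congr 1
  funext k
  simp only [shift]
  congr 1
  omega

lemma F_iter_shift (hF : ∀ c i, F c i = f fun k => c (i + (k : ℕ))) (c : ℕ → A) (j : ℕ) :
    F^[j] (shift c) = shift (F^[j] c) := by
  induction j with
  | zero => rfl
  | succ j ih => rw [Function.iterate_succ_apply', ih, F_shift hF, Function.iterate_succ_apply']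

lemma Pc_pos (F : (ℕ → A) → ℕ → A) (n m : ℕ) : 1 ≤ Pc F n m := by
  rw [Pc, Nat.one_le_iff_ne_zero, ← Nat.pos_iff_ne_zero, Set.ncard_pos (Set.toFinite _)]
  exact Set.range_nonempty _

lemma Pc_mono (F : (ℕ → A) → ℕ → A) {n n' m m' : ℕ} (hn : n ≤ n') (hm : m ≤ m') :
    Pc F n m ≤ Pc F n' m' := by
  have key : Set.range (pat F n m) =
      (fun q : Fin n' → Fin m' → A => fun j i => q (Fin.castLE hn j) (Fin.castLE hm i)) ''
        Set.range (pat F n' m') := by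
    ext q
    constructor
    · rintro ⟨c, rfl⟩
      exact ⟨pat F n' m' c, ⟨c, rfl⟩, rfl⟩
    · rintro ⟨_, ⟨c, rfl⟩, rfl⟩
      exact ⟨c, rfl⟩
  rw [Pc, Pc, key]
  exact Set.ncard_image_le (Set.toFinite _)

lemma ncard_univ_prod {α β : Type} [Fintype α] (s : Set β) :
    ((Set.univ : Set α) ×ˢ s).ncard = Fintype.card α * s.ncard := by
  rw [← Nat.card_coe_set_eq, ← Nat.card_coe_set_eq]
  rw [Nat.card_congr (Equiv.Set.prod _ _), Nat.card_prod]
  congr 1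
  rw [Nat.card_congr (Equiv.Set.univ α), Nat.card_eq_fintype_card]

lemma ncard_prod_univ {α β : Type} [Fintype β] (s : Set α) :
    (s ×ˢ (Set.univ : Set β)).ncard = s.ncard * Fintype.card β := by
  rw [← Nat.card_coe_set_eq, ← Nat.card_coe_set_eq]
  rw [Nat.card_congr (Equiv.Set.prod _ _), Nat.card_prod]
  congr 1
  rw [Nat.card_congr (Equiv.Set.univ β), Nat.card_eq_fintype_card]

lemma Pc_add_row (F : (ℕ → A) → ℕ → A) (n m : ℕ) :
    Pc F (n + 1) m ≤ Pc F n m * Fintype.card (Fin m → A) := by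
  classical
  set h : (Fin (n + 1) → Fin m → A) → (Fin n → Fin m → A) × (Fin m → A) :=
    fun q => (fun j => q j.castSucc, q (Fin.last n)) with hh
  have hinj : Function.Injective h := by
    intro q q' he
    funext j
    refine Fin.lastCases ?_ ?_ j
    · exact congrArg Prod.snd he
    · intro j'
      exact congrFun (congrArg Prod.fst he) j'
  have hsub : h '' Set.range (pat F (n + 1) m) ⊆
      Set.range (pat F n m) ×ˢ (Set.univ : Set (Fin m → A)) := by
    rintro _ ⟨_, ⟨c, rfl⟩, rfl⟩
    refine ⟨⟨c, ?_⟩, trivial⟩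
    funext j i
    rfl
  rw [Pc, ← Set.ncard_image_of_injective _ hinj]
  refine (Set.ncard_le_ncard hsub (Set.toFinite _)).trans ?_
  rw [ncard_prod_univ]
  exact le_rfl


def col (f : (Fin (r + 1) → A) → A) {n m : ℕ} (hm : r ≤ m) (a : A) (p : Fin n → Fin m → A) :
    ℕ → A
  | 0 => a
  | (j + 1) =>
    if h : j < n then
      f (fun k => if hk : (k : ℕ) = 0 then col f hm a p j
        else p ⟨j, h⟩ ⟨(k : ℕ) - 1, by have := k.2; omega⟩)
    else a

lemma col_spec (hF : ∀ c i, F c i = f fun k => c (i + (k : ℕ))) {n m : ℕ} (hm : r ≤ m)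
    (c : ℕ → A) : ∀ j, j < n → col f hm (c 0) (pat F n m (shift c)) j = F^[j] c 0 := by
  intro j
  induction j with
  | zero => intro _; rfl
  | succ j ih =>
    intro hj
    have hjn : j < n := by omega
    show (if h : j < n then _ else _) = _
    rw [dif_pos hjn, Function.iterate_succ_apply', hF]
    congr 1
    funext k
    by_cases hk : (k : ℕ) = 0
    · rw [dif_pos hk, ih hjn]
      rw [show 0 + (k : ℕ) = 0 by omega]
    · rw [dif_neg hk]
      show F^[j] (shift c) ((k : ℕ) - 1) = _
      rw [F_iter_shift hF]
      show F^[j] c ((k : ℕ) - 1 + 1) = F^[j] c (0 + (k : ℕ))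
      rw [show (k : ℕ) - 1 + 1 = 0 + (k : ℕ) by omega]

def gmap (f : (Fin (r + 1) → A) → A) {n m : ℕ} (hm : r ≤ m) (q : A × (Fin n → Fin m → A)) :
    Fin n → Fin (m + 1) → A :=
  fun j i => if hi : (i : ℕ) = 0 then col f hm q.1 q.2 j
    else q.2 j ⟨(i : ℕ) - 1, by have := i.2; omega⟩

lemma pat_eq_gmap (hF : ∀ c i, F c i = f fun k => c (i + (k : ℕ))) {n m : ℕ} (hm : r ≤ m)
    (c : ℕ → A) : pat F n (m + 1) c = gmap f hm (c 0, pat F n m (shift c)) := by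
  funext j i
  show F^[j] c i = _
  by_cases hi : (i : ℕ) = 0
  · simp only [gmap]
    rw [dif_pos hi, col_spec hF hm c j j.2, hi]
  · simp only [gmap]
    rw [dif_neg hi]
    show _ = F^[j] (shift c) ((i : ℕ) - 1)
    rw [F_iter_shift hF]
    show F^[j] c (i : ℕ) = F^[j] c ((i : ℕ) - 1 + 1)
    rw [show (i : ℕ) - 1 + 1 = (i : ℕ) by omega]

lemma Pc_succ_col (hF : ∀ c i, F c i = f fun k => c (i + (k : ℕ))) {n m : ℕ} (hm : r ≤ m) :
    Pc F n (m + 1) ≤ Fintype.card A * Pc F n m := by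
  classical
  have hsub : Set.range (pat F n (m + 1)) ⊆
      (gmap f hm) '' ((Set.univ : Set A) ×ˢ Set.range (pat F n m)) := by
    rintro _ ⟨c, rfl⟩
    exact ⟨(c 0, pat F n m (shift c)), ⟨trivial, ⟨shift c, rfl⟩⟩, (pat_eq_gmap hF hm c).symm⟩
  refine (Set.ncard_le_ncard hsub (Set.toFinite _)).trans ?_
  refine (Set.ncard_image_le (Set.toFinite _)).trans ?_
  rw [ncard_univ_prod]
  exact le_rfl

lemma Pc_col_pow (hF : ∀ c i, F c i = f fun k => c (i + (k : ℕ))) {n m : ℕ} (hm : r ≤ m) :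
    Pc F n m ≤ Fintype.card A ^ (m - r) * Pc F n r := by
  induction m, hm using Nat.le_induction with
  | base => simp
  | succ m hm ih =>
    calc Pc F n (m + 1) ≤ Fintype.card A * Pc F n m := Pc_succ_col hF hm
      _ ≤ Fintype.card A * (Fintype.card A ^ (m - r) * Pc F n r) :=
          Nat.mul_le_mul_left _ ih
      _ = Fintype.card A ^ (m + 1 - r) * Pc F n r := by
          rw [Nat.succ_sub hm, pow_succ]; ring

lemma Pc_row_pow (F : (ℕ → A) → ℕ → A) (n m : ℕ) : ∀ k,
    Pc F (n + k) m ≤ Pc F n m * (Fintype.card (Fin m → A)) ^ k := by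
  intro k
  induction k with
  | zero => simp
  | succ k ih =>
    calc Pc F (n + (k + 1)) m = Pc F ((n + k) + 1) m := by ring_nf
      _ ≤ Pc F (n + k) m * Fintype.card (Fin m → A) := Pc_add_row F (n + k) m
      _ ≤ (Pc F n m * Fintype.card (Fin m → A) ^ k) * Fintype.card (Fin m → A) :=
          Nat.mul_le_mul_right _ ih
      _ = Pc F n m * Fintype.card (Fin m → A) ^ (k + 1) := by rw [pow_succ]; ring


lemma trace_pat_ncard (hF : ∀ c i, F c i = f fun k => c (i + (k : ℕ))) {n ℓ : ℕ} :
    (pat shift (n + 1) (ℓ + 1) '' traceSubshift F r).ncard = Pc F (n + ℓ + 1) r := by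
  classical
  set Ψ : (Fin (n + ℓ + 1) → Fin r → A) → (Fin (n + 1) → Fin (ℓ + 1) → Fin r → A) :=
    fun q j i => q ⟨(j : ℕ) + i, by have := j.2; have := i.2; omega⟩ with hΨ
  have him : pat shift (n + 1) (ℓ + 1) '' traceSubshift F r
      = Ψ '' Set.range (pat F (n + ℓ + 1) r) := by
    ext q
    constructor
    · rintro ⟨t, ⟨c, hc⟩, rfl⟩
      refine ⟨pat F (n + ℓ + 1) r c, ⟨c, rfl⟩, ?_⟩
      funext j i k
      show F^[(j : ℕ) + (i : ℕ)] c (k : ℕ) = shift^[(j : ℕ)] t (i : ℕ) k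
      rw [shift_iterate, hc]
      rw [show (i : ℕ) + (j : ℕ) = (j : ℕ) + (i : ℕ) by omega]
    · rintro ⟨_, ⟨c, rfl⟩, rfl⟩
      refine ⟨fun i k => F^[i] c (k : ℕ), ⟨c, fun i k => rfl⟩, ?_⟩
      funext j i k
      show shift^[(j : ℕ)] (fun i' k' => F^[i'] c ((k' : Fin r) : ℕ)) (i : ℕ) k
        = F^[(j : ℕ) + (i : ℕ)] c (k : ℕ)
      rw [shift_iterate]
      show F^[(i : ℕ) + (j : ℕ)] c (k : ℕ) = _
      rw [show (i : ℕ) + (j : ℕ) = (j : ℕ) + (i : ℕ) by omega]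
  have hinj : Function.Injective Ψ := by
    intro q q' h
    funext a
    have ha2 := a.2
    have h1 : min (a : ℕ) n < n + 1 := by omega
    have h2 : (a : ℕ) - min (a : ℕ) n < ℓ + 1 := by omega
    have key := congrFun (congrFun h ⟨min (a : ℕ) n, h1⟩) ⟨(a : ℕ) - min (a : ℕ) n, h2⟩
    simp only [hΨ] at key
    have ha : (⟨min (a : ℕ) n + ((a : ℕ) - min (a : ℕ) n), by omega⟩ : Fin (n + ℓ + 1)) = a :=
      Fin.ext (by simp only []; omega)
    exact ((congrArg q ha).symm.trans key).trans (congrArg q' ha)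
  rw [him, Set.ncard_image_of_injective _ hinj]
  rfl


open ENNReal in
lemma limsup_log_div_le_of_le {u v : ℕ → ℕ} (hv : ∀ n, 1 ≤ v n) {C : ℕ} (hC : 1 ≤ C)
    (hle : ∀ n, u n ≤ C * v n) :
    Filter.atTop.limsup (fun n : ℕ => ENNReal.log (u n) / (n : EReal)) ≤
      Filter.atTop.limsup (fun n : ℕ => ENNReal.log (v n) / (n : EReal)) := by
  have hlogC0 : (0 : EReal) ≤ ENNReal.log (C : ℝ≥0∞) := by
    rw [ENNReal.zero_le_log_iff]
    exact_mod_cast hC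
  have hlogCbot : ENNReal.log (C : ℝ≥0∞) ≠ ⊥ := by
    simp only [ne_eq, ENNReal.log_eq_bot_iff, Nat.cast_eq_zero]
    omega
  have hlogCtop : ENNReal.log (C : ℝ≥0∞) ≠ ⊤ := by
    simp only [ne_eq, ENNReal.log_eq_top_iff]
    exact ENNReal.natCast_ne_top C
  have step1 : ∀ n : ℕ, ENNReal.log (u n) / (n : EReal) ≤
      ENNReal.log (C : ℝ≥0∞) / (n : EReal) + ENNReal.log (v n) / (n : EReal) := by
    intro n
    have h1 : ENNReal.log ((u n : ℝ≥0∞)) ≤ ENNReal.log (C : ℝ≥0∞) + ENNReal.log ((v n : ℝ≥0∞)) := by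
      rw [← ENNReal.log_mul_add]
      apply ENNReal.log_monotone
      exact_mod_cast hle n
    calc ENNReal.log (u n) / (n : EReal)
        ≤ (ENNReal.log (C : ℝ≥0∞) + ENNReal.log ((v n : ℝ≥0∞))) / (n : EReal) :=
          EReal.monotone_div_right_of_nonneg (Nat.cast_nonneg' n) h1
      _ = _ := EReal.div_right_distrib_of_nonneg hlogC0
          (by rw [ENNReal.zero_le_log_iff]; exact_mod_cast hv n)
  refine (limsup_le_limsup (Filter.Eventually.of_forall step1)).trans ?_
  have hlim0 : Filter.atTop.limsup (fun n : ℕ => ENNReal.log (C : ℝ≥0∞) / (n : EReal)) = 0 :=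
    (EReal.tendsto_const_div_atTop_nhds_zero_nat hlogCbot hlogCtop).limsup_eq
  have h2 := EReal.limsup_add_le
    (u := fun n : ℕ => ENNReal.log (C : ℝ≥0∞) / (n : EReal))
    (v := fun n : ℕ => ENNReal.log ((v n : ℝ≥0∞)) / (n : EReal)) (f := Filter.atTop)
    (by rw [hlim0]; exact Or.inl (by simp)) (by rw [hlim0]; exact Or.inl (by simp))
  rw [hlim0, zero_add] at h2
  exact h2

end CA

section Main
variable {A : Type} [Fintype A] [Nonempty A] [UniformSpace A] [DiscreteTopology A]
  {r : ℕ} {f : (Fin (r + 1) → A) → A} {F : (ℕ → A) → ℕ → A}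

lemma coverEntropy_CA (hF : ∀ c i, F c i = f fun k => c (i + (k : ℕ))) (hr : 1 ≤ r) :
    coverEntropy F Set.univ
      = Filter.atTop.limsup (fun n : ℕ => ENNReal.log (Pc F n r) / (n : EReal)) := by
  rw [coverEntropy_eq_iSup_basis hasBasis_pE F Set.univ]
  have hterm : ∀ m : ℕ, coverEntropyEntourage F Set.univ (pE A m)
      = Filter.atTop.limsup (fun n : ℕ => ENNReal.log (Pc F n m) / (n : EReal)) := by
    intro m
    unfold coverEntropyEntourage
    congr 1
    funext n
    rw [coverMincard_eq_pat, Set.image_univ]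
    simp [Pc]
    rw [← Set.Finite.cast_ncard_eq (Set.toFinite _)]
    exact ENat.toENNReal_coe _
  apply le_antisymm
  · refine iSup₂_le fun m _ => ?_
    rw [hterm m]
    rcases le_total m r with hmr | hrm
    · refine limsup_le_limsup (Filter.Eventually.of_forall fun n => ?_)
      exact EReal.monotone_div_right_of_nonneg (Nat.cast_nonneg' n)
        (ENNReal.log_monotone (by exact_mod_cast Pc_mono F le_rfl hmr))
    · exact limsup_log_div_le_of_le (fun n => Pc_pos F n r)
        (Nat.one_le_pow _ _ Fintype.card_pos) (fun n => Pc_col_pow hF hrm)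
  · exact le_iSup₂_of_le r trivial (le_of_eq (hterm r).symm)

lemma coverEntropy_traceSide (hF : ∀ c i, F c i = f fun k => c (i + (k : ℕ))) (hr : 1 ≤ r) :
    coverEntropy (shift (A := Fin r → A)) (traceSubshift F r)
      = Filter.atTop.limsup (fun n : ℕ => ENNReal.log (Pc F n r) / (n : EReal)) := by
  have hne : (traceSubshift F r).Nonempty :=
    ⟨fun i k => F^[i] (fun _ => Classical.arbitrary A) (k : ℕ),
      ⟨fun _ => Classical.arbitrary A, fun i k => rfl⟩⟩
  have hL0 : (0 : EReal)
      ≤ Filter.atTop.limsup (fun n : ℕ => ENNReal.log (Pc F n r) / (n : EReal)) := by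
    refine le_limsup_of_frequently_le' (Filter.Frequently.of_forall fun n => ?_)
    refine EReal.div_nonneg ?_ (Nat.cast_nonneg' n)
    rw [ENNReal.zero_le_log_iff]
    exact_mod_cast Pc_pos F n r
  have hterm : ∀ ℓ : ℕ, coverEntropyEntourage shift (traceSubshift F r) (pE (Fin r → A) (ℓ + 1))
      = Filter.atTop.limsup (fun n : ℕ => ENNReal.log (Pc F (n + ℓ) r) / (n : EReal)) := by
    intro ℓ
    unfold coverEntropyEntourage
    apply Filter.limsup_congr
    filter_upwards [Filter.eventually_ge_atTop 1] with n hn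
    obtain ⟨n', rfl⟩ : ∃ n', n = n' + 1 := ⟨n - 1, by omega⟩
    rw [coverMincard_eq_pat, trace_pat_ncard hF]
    rw [show n' + 1 + ℓ = n' + ℓ + 1 from by omega]
    simp
  rw [coverEntropy_eq_iSup_basis hasBasis_pE]
  apply le_antisymm
  · refine iSup₂_le fun ℓ _ => ?_
    cases ℓ with
    | zero =>
      have h0 : pE (Fin r → A) 0 = Set.univ := by
        ext p
        simp [pE]
      rw [h0, coverEntropyEntourage_univ _ hne]
      exact hL0
    | succ ℓ =>
      rw [hterm ℓ]
      exact limsup_log_div_le_of_le (fun n => Pc_pos F n r)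
        (Nat.one_le_pow _ _ Fintype.card_pos)
        (fun n => (Pc_row_pow F n r ℓ).trans_eq (Nat.mul_comm _ _))
  · refine le_iSup₂_of_le 1 trivial ?_
    rw [hterm 0]
    simp only [Nat.add_zero]
    exact le_rfl

end Main

end TEAux

/-- For a one-sided CA `F` of radius `r ≥ 1` over a finite alphabet, the topological entropy
of `F` equals the topological entropy of the shift on the `r`-th trace subshift. -/
theorem entropy_eq_entropy_of_radius_trace
    {A : Type} [Fintype A] [Nonempty A] [UniformSpace A] [DiscreteTopology A]
    {r : ℕ} (hr : 1 ≤ r)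
    (f : (Fin (r + 1) → A) → A) (F : (ℕ → A) → ℕ → A)
    (hF : ∀ c i, F c i = f fun k => c (i + (k : ℕ))) :
    Dynamics.coverEntropy F Set.univ =
      Dynamics.coverEntropy (shift (A := Fin r → A)) (traceSubshift F r) := by
  rw [TEAux.coverEntropy_CA hF hr, TEAux.coverEntropy_traceSide hF hr]
end

section
/- Let F be a one-sided CA over a finite alphabet A. Then the sequence n ↦ h(τ_n(F), σ) of topological entropies of the trace subshifts is nondecreasing, and h((ℕ → A), F) = sup_{n ≥ 1} h(τ_n(F), σ) (equivalently, the limit of h(τ_n(F), σ) as n → ∞). -/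
open Dynamics Set Filter Uniformity Topology
open scoped SetRel

section Aux

/-- In a finite uniform space with discrete topology, the diagonal is an entourage. -/
lemma idRel_mem_unif {B : Type*} [Finite B] [UniformSpace B] [DiscreteTopology B] :
    (SetRel.id : SetRel B B) ∈ 𝓤 B := by
  have h : ∀ x : B, ∃ V ∈ 𝓤 B, Prod.mk x ⁻¹' V ⊆ {x} := by
    intro x
    have hx : ({x} : Set B) ∈ 𝓝 x := by
      simp [nhds_discrete]
    rw [nhds_eq_comap_uniformity, Filter.mem_comap] at hx
    exact hx
  choose V hV hVx using h
  refine Filter.mem_of_superset ((Filter.iInter_mem).2 hV) ?_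
  rintro ⟨a, b⟩ hab
  have : b ∈ Prod.mk a ⁻¹' V a := Set.mem_iInter.1 hab a
  have : b = a := hVx a this
  simp [this, SetRel.id]

/-- The trace map sending a configuration to the sequence of width-`n` windows of its orbit. -/
def trmap {A : Type*} (F : (ℕ → A) → ℕ → A) (n : ℕ) (c : ℕ → A) : ℕ → (Fin n → A) :=
  fun i k => F^[i] c (k : ℕ)

lemma trmap_semiconj {A : Type*} (F : (ℕ → A) → ℕ → A) (n : ℕ) :
    Function.Semiconj (trmap F n) F (shift (A := Fin n → A)) := by
  intro c
  funext i k
  simp [trmap, shift, Function.iterate_succ_apply]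

lemma trmap_image {A : Type*} (F : (ℕ → A) → ℕ → A) (n : ℕ) :
    trmap F n '' Set.univ = traceSubshift F n := by
  ext t
  constructor
  · rintro ⟨c, -, rfl⟩
    exact ⟨c, fun i k => rfl⟩
  · rintro ⟨c, hc⟩
    refine ⟨c, Set.mem_univ c, ?_⟩
    funext i k
    exact (hc i k).symm

lemma trmap_continuous {A : Type*} [TopologicalSpace A] {F : (ℕ → A) → ℕ → A}
    (hcont : Continuous F) (n : ℕ) : Continuous (trmap F n) := by
  refine continuous_pi fun i => continuous_pi fun k => ?_
  exact (continuous_apply (k : ℕ)).comp (hcont.iterate i)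

/-- Every entourage of the product uniformity on `ℕ → A` (with `A` finite discrete) contains
a cylinder entourage. -/
lemma exists_cyl_subset {A : Type*} [Finite A] [UniformSpace A] [DiscreteTopology A]
    {U : Set ((ℕ → A) × (ℕ → A))} (hU : U ∈ 𝓤 (ℕ → A)) :
    ∃ n : ℕ, {p : (ℕ → A) × (ℕ → A) | ∀ k < n, p.1 k = p.2 k} ⊆ U := by
  rw [Pi.uniformity, Filter.mem_iInf] at hU
  obtain ⟨I, I_fin, V, hV, rfl⟩ := hU
  have : ∀ i : I, ∃ W ∈ 𝓤 A, (fun p : (ℕ → A) × (ℕ → A) => (p.1 (i : ℕ), p.2 (i : ℕ))) ⁻¹' W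
      ⊆ V i := fun i => Filter.mem_comap.1 (hV i)
  choose W hW hWV using this
  obtain ⟨b, hb⟩ := I_fin.bddAbove
  refine ⟨b + 1, ?_⟩
  intro p hp
  refine Set.mem_iInter.2 fun i => hWV i ?_
  have hib : (i : ℕ) ≤ b := hb i.2
  have : p.1 (i : ℕ) = p.2 (i : ℕ) := hp (i : ℕ) (Nat.lt_succ_of_le hib)
  have hrefl : (p.1 (i : ℕ), p.1 (i : ℕ)) ∈ W i := refl_mem_uniformity (hW i)
  simpa [this] using this ▸ hrefl

end Aux

/-- For a one-sided CA `F` over a finite alphabet, the entropies of the trace subshifts are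
nondecreasing in the width, and the topological entropy of `F` is their supremum (equivalently,
their limit). -/
theorem entropy_eq_iSup_trace_entropies
    {A : Type} [Fintype A] [Nonempty A] [UniformSpace A] [DiscreteTopology A]
    (F : (ℕ → A) → ℕ → A) (hcont : Continuous F) (hshift : F ∘ shift = shift ∘ F) :
    (∀ n : ℕ, 1 ≤ n →
      Dynamics.coverEntropy (shift (A := Fin n → A)) (traceSubshift F n) ≤
        Dynamics.coverEntropy (shift (A := Fin (n + 1) → A)) (traceSubshift F (n + 1))) ∧
    Dynamics.coverEntropy F Set.univ =
      ⨆ n : ℕ, Dynamics.coverEntropy (shift (A := Fin (n + 1) → A)) (traceSubshift F (n + 1)) := by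
  constructor
  · -- monotonicity, via the "drop last column" factor map
    intro n _
    set π : (ℕ → (Fin (n + 1) → A)) → (ℕ → (Fin n → A)) :=
      fun t i k => t i (Fin.castSucc k) with hπ
    have hsc : Function.Semiconj π (shift (A := Fin (n + 1) → A)) (shift (A := Fin n → A)) :=
      fun t => rfl
    have hπc : Continuous π :=
      continuous_pi fun i => continuous_pi fun k =>
        (continuous_apply (Fin.castSucc k)).comp (continuous_apply i)
    have himg : π '' traceSubshift F (n + 1) = traceSubshift F n := by
      ext t
      constructor
      · rintro ⟨s, ⟨c, hc⟩, rfl⟩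
        exact ⟨c, fun i k => by simpa using hc i (Fin.castSucc k)⟩
      · rintro ⟨c, hc⟩
        refine ⟨trmap F (n + 1) c, ⟨c, fun i k => rfl⟩, ?_⟩
        funext i k
        simpa [hπ, trmap] using (hc i k).symm
    calc coverEntropy (shift (A := Fin n → A)) (traceSubshift F n)
        = coverEntropy (shift (A := Fin n → A)) (π '' traceSubshift F (n + 1)) := by rw [himg]
      _ ≤ coverEntropy (shift (A := Fin (n + 1) → A)) (traceSubshift F (n + 1)) :=
          coverEntropy_image_le_of_uniformContinuous hsc
            (CompactSpace.uniformContinuous_of_continuous hπc) _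
  · apply le_antisymm
    · -- coverEntropy F univ ≤ sup
      refine iSup₂_le fun U hU => ?_
      obtain ⟨n, hn⟩ := exists_cyl_subset hU
      -- go one step further so that the index is of the form m+1
      have hn' : {p : (ℕ → A) × (ℕ → A) | ∀ k < n + 1, p.1 k = p.2 k} ⊆ U :=
        fun p hp => hn fun k hk => hp k (Nat.lt_succ_of_lt hk)
      set W : Set ((ℕ → (Fin (n + 1) → A)) × (ℕ → (Fin (n + 1) → A))) :=
        {q | q.1 0 = q.2 0} with hWdef
      have hWsymm : SetRel.IsSymm W := by
        constructor
        intro a b h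
        exact Eq.symm h
      have hWW : W ○ W ⊆ W := by
        rintro ⟨t, u⟩ ⟨s, h1, h2⟩
        exact h1.trans h2
      have hWuni : W ∈ 𝓤 (ℕ → (Fin (n + 1) → A)) := by
        rw [Pi.uniformity]
        refine Filter.mem_iInf_of_mem 0 ?_
        refine Filter.mem_comap.2 ⟨SetRel.id, idRel_mem_unif, ?_⟩
        intro q hq
        simpa [hWdef, SetRel.id] using hq
      have hcyl : Prod.map (trmap F (n + 1)) (trmap F (n + 1)) ⁻¹' (W ○ W) ⊆ U := by
        intro p hp
        apply hn'
        have hp' : trmap F (n + 1) p.1 0 = trmap F (n + 1) p.2 0 := by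
          have := @hWW (Prod.map (trmap F (n + 1)) (trmap F (n + 1)) p) hp; exact this
        intro k hk
        have := congrFun hp' ⟨k, hk⟩
        simpa [trmap] using this
      calc coverEntropyEntourage F Set.univ U
          ≤ coverEntropyEntourage F Set.univ
            (Prod.map (trmap F (n + 1)) (trmap F (n + 1)) ⁻¹' (W ○ W)) :=
            coverEntropyEntourage_antitone F Set.univ hcyl
        _ ≤ coverEntropyEntourage (shift (A := Fin (n + 1) → A))
            (trmap F (n + 1) '' Set.univ) W :=
            le_coverEntropyEntourage_image (trmap_semiconj F (n + 1)) Set.univ (V := W)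
        _ ≤ coverEntropy (shift (A := Fin (n + 1) → A)) (traceSubshift F (n + 1)) := by
            rw [trmap_image]
            exact coverEntropyEntourage_le_coverEntropy _ _ hWuni
        _ ≤ ⨆ m : ℕ, coverEntropy (shift (A := Fin (m + 1) → A)) (traceSubshift F (m + 1)) :=
            le_iSup (fun m => coverEntropy (shift (A := Fin (m + 1) → A))
              (traceSubshift F (m + 1))) n
    · -- sup ≤ coverEntropy F univ
      refine iSup_le fun n => ?_
      rw [← trmap_image F (n + 1)]
      exact coverEntropy_image_le_of_uniformContinuous (trmap_semiconj F (n + 1))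
        (CompactSpace.uniformContinuous_of_continuous (trmap_continuous hcont (n + 1))) Set.univ
end

section
/- Let F be an injective one-sided CA over a finite alphabet A of radius 1 with local rule f : A × A → A (so F(c)(i) = f(c(i), c(i+1))). Then for every fixed a ∈ A, the map ρ_a : A → A defined by ρ_a(x) = f(x, a) is a bijection (a permutation of A). -/
/-- If the radius-1 one-sided CA `F` with local rule `f` over a finite alphabet is injective,
then for every fixed right neighbor `a` the map `x ↦ f(x, a)` is a permutation of the
alphabet. -/
theorem rightNeighbor_maps_bijective_of_injective
    {A : Type} [Fintype A] [Nonempty A]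
    (f : A × A → A) (F : (ℕ → A) → ℕ → A)
    (hF : ∀ c i, F c i = f (c i, c (i + 1)))
    (hinj : Function.Injective F) :
    ∀ a : A, Function.Bijective fun x => f (x, a) := by
  intro a
  apply Finite.injective_iff_bijective.mp
  intro x y hxy
  simp only at hxy
  have h := hinj (a₁ := fun i => if i = 0 then x else a)
                 (a₂ := fun i => if i = 0 then y else a) ?_
  · have := congrFun h 0
    simpa using this
  · funext i
    rw [hF, hF]
    cases i with
    | zero => simpa using hxy
    | succ n => simp
end

section
/- Let A = Fin 3 with elements 0, 1, 2, and let F be the radius-1 one-sided CA over A with F(c)(i) = ρ_{c(i+1)}(c(i)), where ρ₀ = ρ₂ swaps 1 and 2 (fixing 0) and ρ₁ is the 3-cycle 0↦1, 1↦2, 2↦0. Identify the first trace subshift τ₁(F) with a subset of A^ℕ (i.e., τ₁(F) = { t : ℕ → A | ∃ c, ∀ i, t(i) = F^i(c)(0) }). Then τ₁(F) consists exactly of those t ∈ A^ℕ such that either (∀ i, (t(2i), t(2i+1)) ∈ {(0,0), (1,2)}), or (t(0) ∈ {0, 2} and ∀ i, (t(2i+1), t(2i+2)) ∈ {(0,0),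 (1,2)}); that is, τ₁(F) is the set of one-sided sequences obtained as (suffixes of) infinite concatenations of the blocks 00 and 12. -/
/-- The permutations `ρ₀ = ρ₂ = (0)(12)` and `ρ₁ = (012)` (i.e. `0↦1, 1↦2, 2↦0`),
as a family indexed by the right neighbor: `rho b x = ρ_b(x)`. -/
def rho : Fin 3 → Fin 3 → Fin 3 := ![![0, 2, 1], ![1, 2, 0], ![0, 2, 1]]

/-- The radius-1 one-sided CA `F(c)(i) = ρ_{c(i+1)}(c(i))` of the example. -/
def Fex : (ℕ → Fin 3) → ℕ → Fin 3 := fun c i => rho (c (i + 1)) (c i)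

/-- The first trace subshift of `F`, identified with a subset of `(Fin 3)^ℕ`. -/
def trace1 (F : (ℕ → Fin 3) → ℕ → Fin 3) : Set (ℕ → Fin 3) :=
  { t | ∃ c : ℕ → Fin 3, ∀ i : ℕ, t i = F^[i] c 0 }

/-! ### Auxiliary facts about `rho` -/

lemma fin3cases : ∀ a : Fin 3, a = 0 ∨ a = 1 ∨ a = 2 := by decide

lemma rho_eq_two : ∀ b a : Fin 3, rho b a = 2 → a = 1 := by decide

lemma rho_one : ∀ b : Fin 3, rho b 1 = 2 := by decide

lemma rho_two_zero : ∀ b : Fin 3, rho b 2 = 0 → b = 1 := by decide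

lemma rho_zero_one : ∀ b : Fin 3, rho b 0 = 1 → b = 1 := by decide

lemma pair_mem_iff (a b : Fin 3) :
    (a, b) ∈ ({(0, 0), (1, 2)} : Set (Fin 3 × Fin 3)) ↔ (a = 0 ∧ b = 0) ∨ (a = 1 ∧ b = 2) := by
  simp [Prod.ext_iff]

/-- Aligned: concatenation of blocks `00`, `12` starting at position 0. -/
def Al (t : ℕ → Fin 3) : Prop :=
  ∀ i, (t (2 * i) = 0 ∧ t (2 * i + 1) = 0) ∨ (t (2 * i) = 1 ∧ t (2 * i + 1) = 2)

/-- Offset: a half block then blocks `00`, `12`. -/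
def Off (t : ℕ → Fin 3) : Prop :=
  (t 0 = 0 ∨ t 0 = 2) ∧
    ∀ i, (t (2 * i + 1) = 0 ∧ t (2 * i + 2) = 0) ∨ (t (2 * i + 1) = 1 ∧ t (2 * i + 2) = 2)

/-! ### Forward direction: the key parity lemma

In any space-time diagram `x` of `Fex`, any two occurrences of the symbol `2` in a
single column are an even (time-)distance apart. -/

lemma key (x : ℕ → ℕ → Fin 3) (hx : ∀ n k, x (n + 1) k = rho (x n (k + 1)) (x n k)) :
    ∀ d k m, x m k = 2 → x (m + d) k = 2 → Even d := by
  intro d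
  induction d using Nat.strong_induction_on with
  | _ d IH =>
  intro k m h1 h2
  by_cases hmid : ∃ j, 0 < j ∧ j < d ∧ x (m + j) k = 2
  · obtain ⟨j, hj0, hjd, hj⟩ := hmid
    obtain ⟨a, ha⟩ := IH j hjd k m h1 hj
    obtain ⟨b, hb⟩ := IH (d - j) (by omega) k (m + j) hj
      (by rw [show m + j + (d - j) = m + d by omega]; exact h2)
    exact ⟨a + b, by omega⟩
  · push_neg at hmid
    by_cases hd : d ≤ 2
    · interval_cases d
      · exact Even.zero
      · -- d = 1 : impossible since a `2` is always preceded by a `1`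
        exfalso
        have h := hx m k
        rw [h] at h2
        have := rho_eq_two _ _ h2
        rw [this] at h1
        exact absurd h1 (by decide)
      · exact ⟨1, rfl⟩
    · push_neg at hd
      have hd3 : 3 ≤ d := hd
      -- front part: x (m+1) k = 0, hence x m (k+1) = 1, hence x (m+1) (k+1) = 2
      have hA2 : x (m + 1) k ≠ 2 := hmid 1 (by omega) (by omega)
      have hA1 : x (m + 1) k ≠ 1 := by
        intro h
        have h2' : x (m + 2) k = 2 := by
          rw [show m + 2 = (m + 1) + 1 from rfl, hx, h]; exact rho_one _
        exact hmid 2 (by omega) (by omega) h2'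
      have hA0 : x (m + 1) k = 0 := by rcases fin3cases (x (m + 1) k) with h | h | h <;> tauto
      have hB1 : x m (k + 1) = 1 := by
        apply rho_two_zero (x m (k + 1))
        rw [← h1, ← hx, hA0]
      have hB2 : x (m + 1) (k + 1) = 2 := by rw [hx, hB1]; exact rho_one _
      -- back part: x (m+d-1) k = 1 and x (m+d-2) k = 0, hence x (m+d-1) (k+1) = 2
      have hC1 : x (m + (d - 1)) k = 1 := by
        apply rho_eq_two (x (m + (d - 1)) (k + 1))
        rw [← hx, show m + (d - 1) + 1 = m + d by omega]; exact h2
      have hD2 : x (m + (d - 2)) k ≠ 2 := hmid (d - 2) (by omega) (by omega)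
      have hD1 : x (m + (d - 2)) k ≠ 1 := by
        intro h
        have h2' : x (m + (d - 1)) k = 2 := by
          rw [show m + (d - 1) = (m + (d - 2)) + 1 by omega, hx, h]; exact rho_one _
        rw [h2'] at hC1
        exact absurd hC1 (by decide)
      have hD0 : x (m + (d - 2)) k = 0 := by
        rcases fin3cases (x (m + (d - 2)) k) with h | h | h <;> tauto
      have hE1 : x (m + (d - 2)) (k + 1) = 1 := by
        apply rho_zero_one (x (m + (d - 2)) (k + 1))
        rw [← hD0, ← hx, show m + (d - 2) + 1 = m + (d - 1) by omega]
        exact hC1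
      have hE2 : x (m + (d - 1)) (k + 1) = 2 := by
        rw [show m + (d - 1) = (m + (d - 2)) + 1 by omega, hx, hE1]; exact rho_one _
      obtain ⟨a, ha⟩ := IH (d - 2) (by omega) (k + 1) (m + 1) hB2
        (by rw [show m + 1 + (d - 2) = m + (d - 1) by omega]; exact hE2)
      exact ⟨a + 1, by omega⟩

/-! ### Backward direction: explicit witnesses for the neighbor column -/

/-- Witness neighbor column for an aligned trace `t`; it is an offset trace. -/
def wA (t : ℕ → Fin 3) : ℕ → Fin 3 := fun n =>
  if n = 0 then 0
  else if n % 2 = 1 then (if t (n + 1) = rho 1 (t n) then 1 else 0)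
  else (if t n = rho 1 (t (n - 1)) then 2 else 0)

/-- Witness neighbor column for an offset trace `t`; it is an aligned trace. -/
def wO (t : ℕ → Fin 3) : ℕ → Fin 3 := fun n =>
  if n % 2 = 0 then (if t (n + 1) = rho 1 (t n) then 1 else 0)
  else (if t n = rho 1 (t (n - 1)) then 2 else 0)

lemma wA_zero (t : ℕ → Fin 3) : wA t 0 = 0 := by simp [wA]

lemma wA_odd (t : ℕ → Fin 3) (i : ℕ) :
    wA t (2 * i + 1) = if t (2 * i + 2) = rho 1 (t (2 * i + 1)) then 1 else 0 := by
  have h1 : 2 * i + 1 ≠ 0 := by omega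
  have h2 : (2 * i + 1) % 2 = 1 := by omega
  simp only [wA, h1, if_false, h2, if_true]

lemma wA_even (t : ℕ → Fin 3) (i : ℕ) :
    wA t (2 * i + 2) = if t (2 * i + 2) = rho 1 (t (2 * i + 1)) then 2 else 0 := by
  have h1 : 2 * i + 2 ≠ 0 := by omega
  have h2 : ¬((2 * i + 2) % 2 = 1) := by omega
  have h3 : 2 * i + 2 - 1 = 2 * i + 1 := by omega
  simp only [wA, h1, if_false, h2, h3]

lemma wO_even (t : ℕ → Fin 3) (i : ℕ) :
    wO t (2 * i) = if t (2 * i + 1) = rho 1 (t (2 * i)) then 1 else 0 := by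
  have h2 : (2 * i) % 2 = 0 := by omega
  simp only [wO, h2, if_true]

lemma wO_odd (t : ℕ → Fin 3) (i : ℕ) :
    wO t (2 * i + 1) = if t (2 * i + 1) = rho 1 (t (2 * i)) then 2 else 0 := by
  have h2 : ¬((2 * i + 1) % 2 = 0) := by omega
  have h3 : 2 * i + 1 - 1 = 2 * i := by omega
  simp only [wO, h2, if_false, h3]

lemma wA_mem (t : ℕ → Fin 3) : Off (wA t) := by
  constructor
  · left; exact wA_zero t
  · intro i
    rw [wA_odd, wA_even]
    split
    · right; exact ⟨rfl, rfl⟩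
    · left; exact ⟨rfl, rfl⟩

lemma wO_mem (t : ℕ → Fin 3) : Al (wO t) := by
  intro i
  rw [wO_even, wO_odd]
  split
  · right; exact ⟨rfl, rfl⟩
  · left; exact ⟨rfl, rfl⟩

lemma relA (t : ℕ → Fin 3) (hA : Al t) : ∀ n, t (n + 1) = rho (wA t n) (t n) := by
  intro n
  obtain ⟨k, hk | hk⟩ := Nat.even_or_odd' n
  · -- n = 2k : inside a block of t
    subst hk
    rcases k with _ | j
    · -- n = 0
      have hp := hA 0
      norm_num at hp
      norm_num [wA_zero]
      rcases hp with ⟨h1, h2⟩ | ⟨h1, h2⟩ <;> rw [h1, h2] <;> decide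
    · -- n = 2j + 2
      have e : 2 * (j + 1) = 2 * j + 2 := by ring
      have hp := hA (j + 1)
      rw [e] at hp
      have hw : wA t (2 * j + 2) = 0 ∨ wA t (2 * j + 2) = 2 := by
        rw [wA_even]; split
        · right; rfl
        · left; rfl
      rw [e]
      rcases hw with hw | hw <;> rw [hw] <;>
        rcases hp with ⟨h1, h2⟩ | ⟨h1, h2⟩ <;> rw [h1, h2] <;> decide
  · -- n = 2k + 1 : block boundary
    subst hk
    rw [wA_odd]
    split
    · assumption
    · rename_i hcond
      have hp1 := hA k
      have hp2 := hA (k + 1)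
      have e : 2 * (k + 1) = 2 * k + 1 + 1 := by ring
      rw [e] at hp2
      rcases hp1 with ⟨_, h1⟩ | ⟨_, h1⟩ <;> rcases hp2 with ⟨h2, _⟩ | ⟨h2, _⟩ <;>
        first
          | (rw [h2, h1]; decide)
          | (exfalso; apply hcond; rw [h2, h1]; decide)

lemma relO (t : ℕ → Fin 3) (hO : Off t) : ∀ n, t (n + 1) = rho (wO t n) (t n) := by
  intro n
  obtain ⟨k, hk | hk⟩ := Nat.even_or_odd' n
  · -- n = 2k : block boundary
    subst hk
    rw [wO_even]
    split
    · assumption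
    · rename_i hcond
      have h0 : t (2 * k) = 0 ∨ t (2 * k) = 2 := by
        rcases k with _ | j
        · exact hO.1
        · have hp := hO.2 j
          have e : 2 * (j + 1) = 2 * j + 2 := by ring
          rw [e]
          rcases hp with ⟨_, h⟩ | ⟨_, h⟩
          · left; exact h
          · right; exact h
      have h1 : t (2 * k + 1) = 0 ∨ t (2 * k + 1) = 1 := by
        rcases hO.2 k with ⟨h, _⟩ | ⟨h, _⟩
        · left; exact h
        · right; exact h
      rcases h0 with h0 | h0 <;> rcases h1 with h1 | h1 <;>
        first
          | (rw [h1, h0]; decide)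
          | (exfalso; apply hcond; rw [h1, h0]; decide)
  · -- n = 2k + 1 : inside a block
    subst hk
    have hw : wO t (2 * k + 1) = 0 ∨ wO t (2 * k + 1) = 2 := by
      rw [wO_odd]; split
      · right; rfl
      · left; rfl
    have hp := hO.2 k
    rcases hw with hw | hw <;> rw [hw] <;>
      rcases hp with ⟨h1, h2⟩ | ⟨h1, h2⟩ <;> rw [h1, h2] <;> decide

open scoped Classical in
/-- One step of the witness construction. -/
noncomputable def pick (t : ℕ → Fin 3) : ℕ → Fin 3 :=
  if Al t then wA t else wO t

lemma pick_spec (t : ℕ → Fin 3) (h : Al t ∨ Off t) :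
    (Al (pick t) ∨ Off (pick t)) ∧ ∀ n, t (n + 1) = rho (pick t n) (t n) := by
  unfold pick
  split
  · rename_i hA
    exact ⟨Or.inr (wA_mem t), relA t hA⟩
  · rename_i hA
    have hO : Off t := h.resolve_left hA
    exact ⟨Or.inl (wO_mem t), relO t hO⟩

/-- The tower of witness columns above a given trace. -/
noncomputable def seqT (t : ℕ → Fin 3) : ℕ → (ℕ → Fin 3)
  | 0 => t
  | k + 1 => pick (seqT t k)

/-- The first trace subshift of the example CA `F` is exactly the set of one-sided infinite
sequences obtained as (suffixes of) infinite concatenations of the blocks `00` and `12`. -/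
theorem trace1_of_example_CA :
    trace1 Fex =
      { t : ℕ → Fin 3 |
        (∀ i : ℕ, (t (2 * i), t (2 * i + 1)) ∈ ({(0, 0), (1, 2)} : Set (Fin 3 × Fin 3))) ∨
        (t 0 ∈ ({0, 2} : Set (Fin 3)) ∧
          ∀ i : ℕ, (t (2 * i + 1), t (2 * i + 2)) ∈ ({(0, 0), (1, 2)} : Set (Fin 3 × Fin 3))) } := by
  ext t
  simp only [trace1, Set.mem_setOf_eq, Set.mem_insert_iff, Set.mem_singleton_iff, Prod.mk.injEq]
  constructor
  · -- forward: every trace is in the set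
    rintro ⟨c, ht⟩
    set x : ℕ → ℕ → Fin 3 := fun n k => Fex^[n] c k with hxdef
    have hx : ∀ n k, x (n + 1) k = rho (x n (k + 1)) (x n k) := by
      intro n k
      show Fex^[n + 1] c k = _
      rw [Function.iterate_succ_apply']
      rfl
    have ht' : ∀ i, t i = x i 0 := ht
    have hpar := key x hx
    by_cases h2 : ∃ m, Even m ∧ x m 0 = 2
    · -- offset case
      right
      obtain ⟨m, ⟨b, hb⟩, hm2⟩ := h2
      have heven : ∀ n, x n 0 = 2 → Even n := by
        intro n hn
        rcases le_total m n with h | h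
        · obtain ⟨a, ha⟩ := hpar (n - m) 0 m hm2
            (by rw [show m + (n - m) = n by omega]; exact hn)
          exact ⟨a + b, by omega⟩
        · obtain ⟨a, ha⟩ := hpar (m - n) 0 n hn
            (by rw [show n + (m - n) = m by omega]; exact hm2)
          exact ⟨b - a, by omega⟩
      have not2odd : ∀ i, x (2 * i + 1) 0 ≠ 2 := by
        intro i h
        obtain ⟨a, ha⟩ := heven _ h
        omega
      have not1even : ∀ i, x (2 * i) 0 ≠ 1 := by
        intro i h
        have h2' : x (2 * i + 1) 0 = 2 := by rw [hx, h]; exact rho_one _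
        exact not2odd i h2'
      constructor
      · rw [ht' 0]
        have := not1even 0
        rw [show 2 * 0 = 0 from rfl] at this
        rcases fin3cases (x 0 0) with h | h | h <;> tauto
      · intro i
        rw [ht' (2 * i + 1), ht' (2 * i + 2)]
        rcases fin3cases (x (2 * i + 1) 0) with h | h | h
        · left
          refine ⟨h, ?_⟩
          have hn2 : x (2 * i + 2) 0 ≠ 2 := by
            intro hc
            have : x (2 * i + 1) 0 = 1 := by
              apply rho_eq_two (x (2 * i + 1) 1)
              rw [← hx]; exact hc
            rw [h] at this; exact absurd this (by decide)
          have hn1 : x (2 * i + 2) 0 ≠ 1 := by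
            have := not1even (i + 1)
            rw [show 2 * (i + 1) = 2 * i + 2 by ring] at this
            exact this
          rcases fin3cases (x (2 * i + 2) 0) with h' | h' | h' <;> tauto
        · right
          refine ⟨h, ?_⟩
          rw [show 2 * i + 2 = (2 * i + 1) + 1 from rfl, hx, h]
          exact rho_one _
        · exact absurd h (not2odd i)
    · -- aligned case
      left
      push_neg at h2
      have not2even : ∀ i, x (2 * i) 0 ≠ 2 := fun i => h2 (2 * i) ⟨i, by omega⟩
      have not1odd : ∀ i, x (2 * i + 1) 0 ≠ 1 := by
        intro i h
        have h2' : x (2 * i + 2) 0 = 2 := by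
          rw [show 2 * i + 2 = (2 * i + 1) + 1 from rfl, hx, h]; exact rho_one _
        exact h2 (2 * i + 2) ⟨i + 1, by omega⟩ h2'
      intro i
      rw [ht' (2 * i), ht' (2 * i + 1)]
      rcases fin3cases (x (2 * i) 0) with h | h | h
      · left
        refine ⟨h, ?_⟩
        have hn2 : x (2 * i + 1) 0 ≠ 2 := by
          intro hc
          have : x (2 * i) 0 = 1 := by
            apply rho_eq_two (x (2 * i) 1)
            rw [← hx]; exact hc
          rw [h] at this; exact absurd this (by decide)
        have hn1 := not1odd i
        rcases fin3cases (x (2 * i + 1) 0) with h' | h' | h' <;> tauto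
      · right
        refine ⟨h, ?_⟩
        rw [hx, h]
        exact rho_one _
      · exact absurd h (not2even i)
  · -- backward: every element of the set is a trace
    intro hmem
    have ht0 : Al t ∨ Off t := by
      rcases hmem with h | ⟨h0, h⟩
      · exact Or.inl h
      · exact Or.inr ⟨h0, h⟩
    have hS : ∀ k, Al (seqT t k) ∨ Off (seqT t k) := by
      intro k
      induction k with
      | zero => exact ht0
      | succ k ih => exact (pick_spec _ ih).1
    have hrel : ∀ k n, seqT t k (n + 1) = rho (seqT t (k + 1) n) (seqT t k n) :=
      fun k n => (pick_spec _ (hS k)).2 n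
    refine ⟨fun k => seqT t k 0, ?_⟩
    have main : ∀ n k, Fex^[n] (fun k => seqT t k 0) k = seqT t k n := by
      intro n
      induction n with
      | zero => intro k; rfl
      | succ n ih =>
        intro k
        rw [Function.iterate_succ_apply']
        show rho (Fex^[n] _ (k + 1)) (Fex^[n] _ k) = _
        rw [ih, ih, ← hrel]
    intro i
    rw [main i 0]
    rfl
end

section
/- Let A = Fin 3 with elements 0, 1, 2, and let F be the radius-1 one-sided CA over A with F(c)(i) = ρ_{c(i+1)}(c(i)), where ρ₀ = ρ₂ swaps 1 and 2 (fixing 0) and ρ₁ is the 3-cycle 0↦1, 1↦2, 2↦0. If t ∈ τ₁(F) and there are indices i and n ≥ 0 such that t(i) = 2, t(j) = 0 for all i < j ≤ i + n, and t(i + n + 1) = 1 (i.e., the word 2·0ⁿ·1 occurs in t), then n is even. -/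
lemma Fex_shift (c : ℕ → Fin 3) : Fex (shift c) = shift (Fex c) := rfl

lemma iter_shift (k : ℕ) (c : ℕ → Fin 3) : Fex^[k] (shift c) = shift (Fex^[k] c) := by
  induction k with
  | zero => rfl
  | succ k ih =>
      rw [Function.iterate_succ_apply', Function.iterate_succ_apply', ih, Fex_shift]

lemma key_s15 : ∀ n : ℕ, ∀ c : ℕ → Fin 3, ∀ s : ℕ,
    Fex^[s] c 0 = 2 →
    (∀ j, 1 ≤ j → j ≤ n → Fex^[s + j] c 0 = 0) →
    Fex^[s + n + 1] c 0 = 1 → Even n := by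
  intro n
  induction n using Nat.strong_induction_on with
  | _ n ih =>
    intro c s h2 h0 h1
    have step0 : ∀ k, Fex^[k + 1] c 0 = rho (Fex^[k] c 1) (Fex^[k] c 0) := by
      intro k; rw [Function.iterate_succ_apply']; rfl
    have step1 : ∀ k, Fex^[k + 1] c 1 = rho (Fex^[k] c 2) (Fex^[k] c 1) := by
      intro k; rw [Function.iterate_succ_apply']; rfl
    match n, ih, h0, h1 with
    | 0, _, _, _ => exact Even.zero
    | 1, _, h0, h1 =>
        exfalso
        have ha1 : Fex^[s + 1] c 0 = 0 := h0 1 le_rfl le_rfl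
        have hbs : Fex^[s] c 1 = 1 := by
          have h := step0 s
          rw [h2, ha1] at h
          exact (by decide : ∀ b : Fin 3, (0 : Fin 3) = rho b 2 → b = 1) _ h
        have hbs1 : Fex^[s + 1] c 1 = 2 := by
          have h := step1 s
          rw [hbs] at h
          rw [h]
          exact (by decide : ∀ x : Fin 3, rho x 1 = 2) _
        have h := step0 (s + 1)
        rw [h1, ha1, hbs1] at h
        exact absurd h (by decide)
    | (n + 2), ih, h0, h1 =>
        -- the not-1 condition for cell 1 in the middle of the run
        have hbne : ∀ k, 1 ≤ k → k ≤ n + 1 → Fex^[s + k] c 1 ≠ 1 := by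
          intro k hk1 hk2
          have ha : Fex^[s + k] c 0 = 0 := h0 k hk1 (by omega)
          have ha' : Fex^[s + k + 1] c 0 = 0 := by
            have h := h0 (k + 1) (by omega) (by omega)
            rw [show s + (k + 1) = s + k + 1 from by omega] at h
            exact h
          have h := step0 (s + k)
          rw [ha, ha'] at h
          exact (by decide : ∀ b : Fin 3, (0 : Fin 3) = rho b 0 → b ≠ 1) _ h
        have ha1 : Fex^[s + 1] c 0 = 0 := h0 1 le_rfl (by omega)
        have hbs : Fex^[s] c 1 = 1 := by
          have h := step0 s
          rw [h2, ha1] at h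
          exact (by decide : ∀ b : Fin 3, (0 : Fin 3) = rho b 2 → b = 1) _ h
        have hbs1 : Fex^[s + 1] c 1 = 2 := by
          have h := step1 s
          rw [hbs] at h
          rw [h]
          exact (by decide : ∀ x : Fin 3, rho x 1 = 2) _
        have hstep' : ∀ k, (Fex^[k] c 1 = 2 ∨ Fex^[k] c 1 = 0) →
            Fex^[k + 1] c 1 ≠ 1 → Fex^[k + 1] c 1 = 0 := by
          intro k hk hne
          have h := step1 k
          rcases hk with h' | h'
          · rw [h'] at h
            rw [h] at hne ⊢
            exact (by decide : ∀ x : Fin 3, rho x 2 ≠ 1 → rho x 2 = 0) _ hne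
          · rw [h'] at h
            rw [h] at hne ⊢
            exact (by decide : ∀ x : Fin 3, rho x 0 ≠ 1 → rho x 0 = 0) _ hne
        have hbz : ∀ j, j + 1 ≤ n → Fex^[s + 1 + (j + 1)] c 1 = 0 := by
          intro j
          induction j with
          | zero =>
              intro hj
              exact hstep' (s + 1) (Or.inl hbs1)
                (by rw [show s + 1 + 1 = s + 2 from by omega]
                    exact hbne 2 (by omega) (by omega))
          | succ j ihj =>
              intro hj
              have prev := ihj (by omega)
              exact hstep' (s + 1 + (j + 1)) (Or.inr prev)
                (by rw [show s + 1 + (j + 1) + 1 = s + (j + 3) from by omega]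
                    exact hbne (j + 3) (by omega) (by omega))
        have hbend : Fex^[s + (n + 2)] c 1 = 1 := by
          have h := step0 (s + (n + 2))
          rw [h0 (n + 2) (by omega) le_rfl] at h
          rw [h1] at h
          exact (by decide : ∀ b : Fin 3, (1 : Fin 3) = rho b 0 → b = 1) _ h
        have hn : Even n := by
          apply ih n (by omega) (shift c) (s + 1)
          · rw [iter_shift]; exact hbs1
          · intro j hj1 hj2
            rw [iter_shift]
            have h := hbz (j - 1) (by omega)
            rw [show j - 1 + 1 = j from by omega] at h
            exact h
          · rw [show s + 1 + n + 1 = s + (n + 2) from by omega, iter_shift]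
            exact hbend
        obtain ⟨m, hm⟩ := hn
        exact ⟨m + 1, by omega⟩

/-- If the word `2·0ⁿ·1` occurs in an element of the first trace subshift of the example CA,
then `n` is even. -/
theorem even_zero_run_between_two_and_one
    (t : ℕ → Fin 3) (ht : t ∈ trace1 Fex) (i n : ℕ)
    (h2 : t i = 2)
    (h0 : ∀ j : ℕ, i < j → j ≤ i + n → t j = 0)
    (h1 : t (i + n + 1) = 1) :
    Even n := by
  obtain ⟨c, hc⟩ := ht
  apply key_s15 n c i
  · exact (hc i).symm.trans h2
  · intro j hj1 hj2
    exact (hc (i + j)).symm.trans (h0 (i + j) (by omega) (by omega))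
  · exact (hc (i + n + 1)).symm.trans h1
end
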